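/- arXiv:1205.0305 — 5 statements merged into one kernel-verified Lean document; each statement's English description precedes it below -/
import Mathlib

section
/- For every integer n ≥ 1, the polynomials Q_n satisfy the recurrence Q_{n+1}(x) = ((2n+1)x/(n+1)^2 + (8n^2+8n+3)/(2(n+1)^2)) · Q_n(x) − ((4n−1)(4n+1)/(4(n+1)^2)) · Q_{n−1}(x) + (x/(n+1)^2) · Q_n'(x). -/
open Polynomial

/-- The Boros-Moll polynomial `P_n(x)`. -/
noncomputable def borosMoll (n : ℕ) : Polynomial ℝ :=
  ((2 : ℝ) ^ (2 * n))⁻¹ • ∑ j ∈ Finset.range (n + 1),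
    Polynomial.C ((2 : ℝ) ^ j * (Nat.choose (2 * n - 2 * j) (n - j) : ℝ) *
      (Nat.choose (n + j) j : ℝ)) * (Polynomial.X + 1) ^ j

/-- The coefficients `d_i(n)`, with the convention `d_i(n) = 0` for `i < 0` or `i > n`. -/
noncomputable def bmCoeff (i : ℤ) (n : ℕ) : ℝ :=
  if 0 ≤ i then (borosMoll n).coeff i.toNat else 0

/-- The polynomial `Q_n(x) = ∑ d_i(n)/i! x^i`. -/
noncomputable def Q (n : ℕ) : Polynomial ℝ :=
  ∑ i ∈ Finset.range (n + 1),
    Polynomial.C ((borosMoll n).coeff i / (Nat.factorial i : ℝ)) * Polynomial.X ^ i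

/-- The polynomial `R_n(x) = ∑ d_i(n)/(i+2)! x^i`. -/
noncomputable def R (n : ℕ) : Polynomial ℝ :=
  ∑ i ∈ Finset.range (n + 1),
    Polynomial.C ((borosMoll n).coeff i / (Nat.factorial (i + 2) : ℝ)) * Polynomial.X ^ i

/-- A real polynomial has only real zeros: every complex root is real. -/
def RealRooted (p : Polynomial ℝ) : Prop :=
  ∀ z : ℂ, Polynomial.aeval z p = 0 → z.im = 0

/-- `g` strictly interlaces `f`: `deg f = deg g + 1`, the zeros
`r_1 ≥ ⋯ ≥ r_{m+1}` of `f` and `s_1 ≥ ⋯ ≥ s_m` of `g` satisfy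
`r_{i+1} ≤ s_i ≤ r_i`, and `f, g` have no common zeros. -/
def StrictlyInterlaces (g f : Polynomial ℝ) : Prop :=
  f.natDegree = g.natDegree + 1 ∧
  ∃ (s : Fin g.natDegree → ℝ) (r : Fin (g.natDegree + 1) → ℝ),
    Antitone s ∧ Antitone r ∧
    g.roots = Multiset.map s Finset.univ.val ∧
    f.roots = Multiset.map r Finset.univ.val ∧
    (∀ i : Fin g.natDegree, r i.succ ≤ s i ∧ s i ≤ r i.castSucc) ∧
    ∀ x : ℝ, ¬ (g.IsRoot x ∧ f.IsRoot x)

namespace BMAux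

noncomputable def cc (n j : ℕ) : ℝ :=
  (2 : ℝ) ^ j * (Nat.choose (2 * n - 2 * j) (n - j) : ℝ) * (Nat.choose (n + j) j : ℝ)
lemma cc_eq (j m : ℕ) :
    cc (j + m) j = 2 ^ j * ((2 * m).choose m : ℝ) * ((2 * j + m).choose j : ℝ) := by
  unfold cc
  rw [show 2 * (j + m) - 2 * j = 2 * m by omega, show j + m - j = m by omega,
    show j + m + j = 2 * j + m by omega]
lemma centralBinom_real (k : ℕ) :
    ((k : ℝ) + 1) * ((2 * k + 2).choose (k + 1) : ℝ) =
      2 * (2 * (k : ℝ) + 1) * ((2 * k).choose k : ℝ) := by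
  have h := Nat.succ_mul_centralBinom_succ k
  unfold Nat.centralBinom at h
  rw [show 2 * (k + 1) = 2 * k + 2 by omega] at h
  exact_mod_cast h
lemma rel5 (i k : ℕ) :
    ((2 * i + k + 2).choose (i + 1) : ℝ) * ((i : ℝ) + 1) =
      ((2 * i + k + 2).choose i : ℝ) * ((i : ℝ) + (k : ℝ) + 2) := by
  have h := Nat.choose_succ_right_eq (2 * i + k + 2) i
  rw [show 2 * i + k + 2 - i = i + k + 2 by omega] at h
  exact_mod_cast h
lemma rel_mul_succ (a b c : ℕ) (h : a + 1 - b = c) :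
    ((a).choose b : ℝ) * ((a : ℝ) + 1) = ((a + 1).choose b : ℝ) * (c : ℝ) := by
  have h2 := Nat.choose_mul_succ_eq a b
  rw [h] at h2
  exact_mod_cast h2
lemma rel_succ_mul (a b : ℕ) :
    ((a : ℝ) + 1) * ((a).choose b : ℝ) = ((a + 1).choose (b + 1) : ℝ) * ((b : ℝ) + 1) := by
  exact_mod_cast Nat.add_one_mul_choose_eq a b

set_option maxHeartbeats 2000000 in
/-- Interior case: j = i+1, m = k+1, n = i+k+2. -/
lemma caseA (i k : ℕ) :
    ((i : ℝ) + (k : ℝ) + 3) ^ 2 * cc (i + k + 3) (i + 1) =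
      4 * (2 * ((i : ℝ) + (k : ℝ) + 2) + 1) * ((i : ℝ) + 1) * cc (i + k + 2) i +
        ((16 * ((i : ℝ) + (k : ℝ) + 2) ^ 2 + 8 * ((i : ℝ) + (k : ℝ) + 2) + 2) -
            (16 * ((i : ℝ) + (k : ℝ) + 2) + 4) * ((i : ℝ) + 1)) * cc (i + k + 2) (i + 1) +
        8 * ((i : ℝ) + (k : ℝ) + 2) * ((i : ℝ) + 2) * cc (i + k + 2) (i + 2) -
        4 * (16 * ((i : ℝ) + (k : ℝ) + 2) ^ 2 - 1) * cc (i + k + 1) (i + 1) := by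
  have e1 : cc (i + k + 3) (i + 1) =
      2 ^ (i + 1) * ((2 * k + 4).choose (k + 2) : ℝ) * ((2 * i + k + 4).choose (i + 1) : ℝ) := by
    have := cc_eq (i + 1) (k + 2)
    rw [show i + 1 + (k + 2) = i + k + 3 by omega] at this
    rw [this, show 2 * (k + 2) = 2 * k + 4 by omega, show 2 * (i + 1) + (k + 2) = 2 * i + k + 4 by omega]
  have e2 : cc (i + k + 2) i =
      2 ^ i * ((2 * k + 4).choose (k + 2) : ℝ) * ((2 * i + k + 2).choose i : ℝ) := by
    have := cc_eq i (k + 2)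
    rw [show i + (k + 2) = i + k + 2 by omega] at this
    rw [this, show 2 * (k + 2) = 2 * k + 4 by omega, show 2 * i + (k + 2) = 2 * i + k + 2 by omega]
  have e3 : cc (i + k + 2) (i + 1) =
      2 ^ (i + 1) * ((2 * k + 2).choose (k + 1) : ℝ) * ((2 * i + k + 3).choose (i + 1) : ℝ) := by
    have := cc_eq (i + 1) (k + 1)
    rw [show i + 1 + (k + 1) = i + k + 2 by omega] at this
    rw [this, show 2 * (k + 1) = 2 * k + 2 by omega, show 2 * (i + 1) + (k + 1) = 2 * i + k + 3 by omega]
  have e4 : cc (i + k + 2) (i + 2) =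
      2 ^ (i + 2) * ((2 * k).choose k : ℝ) * ((2 * i + k + 4).choose (i + 2) : ℝ) := by
    have := cc_eq (i + 2) k
    rw [show i + 2 + k = i + k + 2 by omega] at this
    rw [this, show 2 * (i + 2) + k = 2 * i + k + 4 by omega]
  have e5 : cc (i + k + 1) (i + 1) =
      2 ^ (i + 1) * ((2 * k).choose k : ℝ) * ((2 * i + k + 2).choose (i + 1) : ℝ) := by
    have := cc_eq (i + 1) k
    rw [show i + 1 + k = i + k + 1 by omega] at this
    rw [this, show 2 * (i + 1) + k = 2 * i + k + 2 by omega]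
  rw [e1, e2, e3, e4, e5]
  -- abbreviations
  set x1 : ℝ := ((2 * k).choose k : ℝ) with hx1
  set x2 : ℝ := ((2 * k + 2).choose (k + 1) : ℝ) with hx2
  set x3 : ℝ := ((2 * k + 4).choose (k + 2) : ℝ) with hx3
  set y0 : ℝ := ((2 * i + k + 2).choose i : ℝ) with hy0
  set y1 : ℝ := ((2 * i + k + 2).choose (i + 1) : ℝ) with hy1
  set y2 : ℝ := ((2 * i + k + 3).choose (i + 1) : ℝ) with hy2
  set y3 : ℝ := ((2 * i + k + 4).choose (i + 1) : ℝ) with hy3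
  set y4 : ℝ := ((2 * i + k + 4).choose (i + 2) : ℝ) with hy4
  -- relations
  have r1 : ((k : ℝ) + 1) * x2 = 2 * (2 * (k : ℝ) + 1) * x1 := centralBinom_real k
  have r2 : ((k : ℝ) + 2) * x3 = 2 * (2 * (k : ℝ) + 3) * x2 := by
    have := centralBinom_real (k + 1)
    rw [show 2 * (k + 1) + 2 = 2 * k + 4 by omega, show 2 * (k + 1) = 2 * k + 2 by omega] at this
    push_cast at this ⊢
    linarith [this]
  have r5 : y1 * ((i : ℝ) + 1) = y0 * ((i : ℝ) + (k : ℝ) + 2) := rel5 i k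
  have r4 : y1 * (2 * (i : ℝ) + (k : ℝ) + 3) = y2 * ((i : ℝ) + (k : ℝ) + 2) := by
    have := rel_mul_succ (2 * i + k + 2) (i + 1) (i + k + 2) (by omega)
    rw [show 2 * i + k + 2 + 1 = 2 * i + k + 3 by omega] at this
    push_cast at this ⊢
    linarith [this]
  have r3 : y2 * (2 * (i : ℝ) + (k : ℝ) + 4) = y3 * ((i : ℝ) + (k : ℝ) + 3) := by
    have := rel_mul_succ (2 * i + k + 3) (i + 1) (i + k + 3) (by omega)
    rw [show 2 * i + k + 3 + 1 = 2 * i + k + 4 by omega] at this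
    push_cast at this ⊢
    linarith [this]
  have r6 : (2 * (i : ℝ) + (k : ℝ) + 4) * y2 = y4 * ((i : ℝ) + 2) := by
    have := rel_succ_mul (2 * i + k + 3) (i + 1)
    rw [show 2 * i + k + 3 + 1 = 2 * i + k + 4 by omega] at this
    push_cast at this ⊢
    linarith [this]
  -- solve
  have hik2 : (i : ℝ) + (k : ℝ) + 2 ≠ 0 := by positivity
  have hik3 : (i : ℝ) + (k : ℝ) + 3 ≠ 0 := by positivity
  have hi1 : (i : ℝ) + 1 ≠ 0 := by positivity
  have hi2 : (i : ℝ) + 2 ≠ 0 := by positivity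
  have hk1 : (k : ℝ) + 1 ≠ 0 := by positivity
  have hk2 : (k : ℝ) + 2 ≠ 0 := by positivity
  have ey0 : y0 = y1 * ((i : ℝ) + 1) / ((i : ℝ) + (k : ℝ) + 2) := by
    field_simp; linarith [r5]
  have ey2 : y2 = y1 * (2 * (i : ℝ) + (k : ℝ) + 3) / ((i : ℝ) + (k : ℝ) + 2) := by
    field_simp; linarith [r4]
  have ey3 : y3 = y2 * (2 * (i : ℝ) + (k : ℝ) + 4) / ((i : ℝ) + (k : ℝ) + 3) := by
    field_simp; linarith [r3]
  have ey4 : y4 = (2 * (i : ℝ) + (k : ℝ) + 4) * y2 / ((i : ℝ) + 2) := by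
    field_simp; linarith [r6]
  have ex2 : x2 = 2 * (2 * (k : ℝ) + 1) * x1 / ((k : ℝ) + 1) := by
    field_simp; linarith [r1]
  have ex3 : x3 = 2 * (2 * (k : ℝ) + 3) * x2 / ((k : ℝ) + 2) := by
    field_simp; linarith [r2]
  rw [ey3, ey4, ey2, ey0, ex3, ex2]
  field_simp
  ring

/-- j = 0 case, n = k+1. -/
lemma caseA0 (k : ℕ) :
    ((k : ℝ) + 2) ^ 2 * cc (k + 2) 0 =
      (16 * ((k : ℝ) + 1) ^ 2 + 8 * ((k : ℝ) + 1) + 2) * cc (k + 1) 0 +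
        8 * ((k : ℝ) + 1) * 1 * cc (k + 1) 1 -
        4 * (16 * ((k : ℝ) + 1) ^ 2 - 1) * cc k 0 := by
  have e1 : cc (k + 2) 0 = ((2 * k + 4).choose (k + 2) : ℝ) := by
    have := cc_eq 0 (k + 2)
    simp only [zero_add, pow_zero, one_mul] at this
    rw [this, show 2 * (k + 2) = 2 * k + 4 by omega]
    simp
  have e2 : cc (k + 1) 0 = ((2 * k + 2).choose (k + 1) : ℝ) := by
    have := cc_eq 0 (k + 1)
    simp only [zero_add, pow_zero, one_mul] at this
    rw [this, show 2 * (k + 1) = 2 * k + 2 by omega]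
    simp
  have e3 : cc k 0 = ((2 * k).choose k : ℝ) := by
    have := cc_eq 0 k
    simp only [zero_add, pow_zero, one_mul] at this
    rw [this]; simp
  have e4 : cc (k + 1) 1 = 2 * ((2 * k).choose k : ℝ) * ((k : ℝ) + 2) := by
    have := cc_eq 1 k
    rw [show 1 + k = k + 1 by omega] at this
    rw [this, show 2 * 1 + k = k + 2 by omega]
    push_cast [Nat.choose_one_right]
    ring
  rw [e1, e2, e3, e4]
  set x1 : ℝ := ((2 * k).choose k : ℝ)
  set x2 : ℝ := ((2 * k + 2).choose (k + 1) : ℝ)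
  set x3 : ℝ := ((2 * k + 4).choose (k + 2) : ℝ)
  have r1 : ((k : ℝ) + 1) * x2 = 2 * (2 * (k : ℝ) + 1) * x1 := centralBinom_real k
  have r2 : ((k : ℝ) + 2) * x3 = 2 * (2 * (k : ℝ) + 3) * x2 := by
    have := centralBinom_real (k + 1)
    rw [show 2 * (k + 1) + 2 = 2 * k + 4 by omega, show 2 * (k + 1) = 2 * k + 2 by omega] at this
    push_cast at this ⊢
    linarith [this]
  have hk1 : (k : ℝ) + 1 ≠ 0 := by positivity
  have hk2 : (k : ℝ) + 2 ≠ 0 := by positivity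
  have ex2 : x2 = 2 * (2 * (k : ℝ) + 1) * x1 / ((k : ℝ) + 1) := by field_simp; linarith [r1]
  have ex3 : x3 = 2 * (2 * (k : ℝ) + 3) * x2 / ((k : ℝ) + 2) := by field_simp; linarith [r2]
  rw [ex3, ex2]
  field_simp
  ring

/-- j = n case, n = i+1. -/
lemma caseB (i : ℕ) :
    ((i : ℝ) + 2) ^ 2 * cc (i + 2) (i + 1) =
      4 * (2 * ((i : ℝ) + 1) + 1) * ((i : ℝ) + 1) * cc (i + 1) i +
        ((16 * ((i : ℝ) + 1) ^ 2 + 8 * ((i : ℝ) + 1) + 2) -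
          (16 * ((i : ℝ) + 1) + 4) * ((i : ℝ) + 1)) * cc (i + 1) (i + 1) := by
  have e1 : cc (i + 2) (i + 1) = 2 ^ (i + 1) * 2 * ((2 * i + 3).choose (i + 1) : ℝ) := by
    have := cc_eq (i + 1) 1
    rw [show i + 1 + 1 = i + 2 by omega] at this
    rw [this, show 2 * (i + 1) + 1 = 2 * i + 3 by omega]
    norm_num
  have e2 : cc (i + 1) i = 2 ^ i * 2 * ((2 * i + 1).choose i : ℝ) := by
    have := cc_eq i 1
    rw [this]
    norm_num
  have e3 : cc (i + 1) (i + 1) = 2 ^ (i + 1) * ((2 * i + 2).choose (i + 1) : ℝ) := by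
    have := cc_eq (i + 1) 0
    rw [show i + 1 + 0 = i + 1 by omega] at this
    rw [this, show 2 * (i + 1) + 0 = 2 * i + 2 by omega]
    norm_num
  rw [e1, e2, e3]
  set a : ℝ := ((2 * i + 2).choose (i + 1) : ℝ)
  -- C(2i+1, i): from choose_mul_succ_eq: C(2i+1,i+1)... use: C(2i+2, i+1) relations
  have r1 : ((2 * i + 1).choose (i + 1) : ℝ) * (2 * (i : ℝ) + 2) = a * ((i : ℝ) + 1) := by
    have := rel_mul_succ (2 * i + 1) (i + 1) (i + 1) (by omega)
    rw [show 2 * i + 1 + 1 = 2 * i + 2 by omega] at this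
    push_cast at this ⊢; linarith
  have r2 : (2 * (i : ℝ) + 2) * ((2 * i + 1).choose i : ℝ) =
      ((2 * i + 2).choose (i + 1) : ℝ) * ((i : ℝ) + 1) := by
    have := rel_succ_mul (2 * i + 1) i
    rw [show 2 * i + 1 + 1 = 2 * i + 2 by omega] at this
    push_cast at this ⊢; linarith
  have r3 : ((2 * i + 2).choose (i + 1) : ℝ) * (2 * (i : ℝ) + 3) =
      ((2 * i + 3).choose (i + 1) : ℝ) * ((i : ℝ) + 2) := by
    have := rel_mul_succ (2 * i + 2) (i + 1) (i + 2) (by omega)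
    rw [show 2 * i + 2 + 1 = 2 * i + 3 by omega] at this
    push_cast at this ⊢; linarith
  have h1 : (2 * (i : ℝ) + 2) ≠ 0 := by positivity
  have h2 : ((i : ℝ) + 2) ≠ 0 := by positivity
  have e5 : ((2 * i + 1).choose i : ℝ) = a * ((i : ℝ) + 1) / (2 * (i : ℝ) + 2) := by
    rw [eq_div_iff h1]; have ha : a = ((2 * i + 2).choose (i + 1) : ℝ) := rfl; rw [ha]; linarith [r2]
  have e6 : ((2 * i + 3).choose (i + 1) : ℝ) = a * (2 * (i : ℝ) + 3) / ((i : ℝ) + 2) := by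
    field_simp; linarith [r3]
  rw [e5, e6]
  field_simp
  ring

/-- j = n+1 case. -/
lemma caseC (n : ℕ) :
    ((n : ℝ) + 1) ^ 2 * cc (n + 1) (n + 1) =
      4 * (2 * (n : ℝ) + 1) * ((n : ℝ) + 1) * cc n n := by
  have e1 : cc (n + 1) (n + 1) = 2 ^ (n + 1) * ((2 * n + 2).choose (n + 1) : ℝ) := by
    have := cc_eq (n + 1) 0
    rw [show n + 1 + 0 = n + 1 by omega] at this
    rw [this, show 2 * (n + 1) + 0 = 2 * n + 2 by omega]
    norm_num
  have e2 : cc n n = 2 ^ n * ((2 * n).choose n : ℝ) := by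
    have := cc_eq n 0
    rw [show n + 0 = n by omega] at this
    rw [this, show 2 * n + 0 = 2 * n by omega]
    norm_num
  rw [e1, e2]
  have r := centralBinom_real n
  have : (2 : ℝ) ^ (n + 1) = 2 * 2 ^ n := by ring
  rw [this]
  linear_combination 2 * (2:ℝ) ^ n * ((n:ℝ) + 1) * r

noncomputable def Tp (n : ℕ) : Polynomial ℝ :=
  ∑ j ∈ Finset.range (n + 1), C (cc n j) * X ^ j

lemma Tp_coeff (n k : ℕ) : (Tp n).coeff k = if k ≤ n then cc n k else 0 := by
  rw [Tp, finset_sum_coeff]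
  simp only [coeff_C_mul, coeff_X_pow, mul_ite, mul_one, mul_zero]
  rw [Finset.sum_ite_eq (Finset.range (n + 1)) k (cc n)]
  simp [Nat.lt_succ_iff]

lemma Tp_coeff_le {n k : ℕ} (h : k ≤ n) : (Tp n).coeff k = cc n k := by
  rw [Tp_coeff, if_pos h]

lemma Tp_coeff_gt {n k : ℕ} (h : n < k) : (Tp n).coeff k = 0 := by
  rw [Tp_coeff, if_neg (by omega)]

lemma master_zero (ν : ℕ) :
    ((ν : ℝ) + 2) ^ 2 * (Tp (ν + 2)).coeff 0 =
      (16 * ((ν : ℝ) + 1) ^ 2 + 8 * ((ν : ℝ) + 1) + 2) * (Tp (ν + 1)).coeff 0 +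
        8 * ((ν : ℝ) + 1) * 1 * (Tp (ν + 1)).coeff 1 -
        4 * (16 * ((ν : ℝ) + 1) ^ 2 - 1) * (Tp ν).coeff 0 := by
  rw [Tp_coeff_le (by omega), Tp_coeff_le (by omega), Tp_coeff_le (by omega),
    Tp_coeff_le (by omega)]
  linear_combination caseA0 ν

lemma master_succ (ν j : ℕ) (hj : 1 ≤ j) :
    ((ν : ℝ) + 2) ^ 2 * (Tp (ν + 2)).coeff j =
      4 * (2 * ((ν : ℝ) + 1) + 1) * (Tp (ν + 1)).coeff (j - 1) +
        (16 * ((ν : ℝ) + 1) ^ 2 + 8 * ((ν : ℝ) + 1) + 2) * (Tp (ν + 1)).coeff j +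
        4 * (2 * ((ν : ℝ) + 1) + 1) * ((j : ℝ) - 1) * (Tp (ν + 1)).coeff (j - 1) -
        (16 * ((ν : ℝ) + 1) + 4) * (j : ℝ) * (Tp (ν + 1)).coeff j +
        8 * ((ν : ℝ) + 1) * ((j : ℝ) + 1) * (Tp (ν + 1)).coeff (j + 1) -
        4 * (16 * ((ν : ℝ) + 1) ^ 2 - 1) * (Tp ν).coeff j := by
  obtain ⟨i, rfl⟩ : ∃ i, j = i + 1 := ⟨j - 1, by omega⟩
  simp only [show i + 1 - 1 = i from rfl]
  rcases Nat.lt_or_ge i ν with h | h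
  · -- interior: i + 1 ≤ ν, set ν = i + k + 1
    obtain ⟨k, rfl⟩ : ∃ k, ν = i + k + 1 := ⟨ν - i - 1, by omega⟩
    rw [show i + k + 1 + 2 = i + k + 3 by omega, show i + k + 1 + 1 = i + k + 2 by omega]
    rw [Tp_coeff_le (by omega), Tp_coeff_le (by omega), Tp_coeff_le (by omega),
      Tp_coeff_le (by omega), Tp_coeff_le (by omega)]
    push_cast
    linear_combination caseA i k
  · rcases Nat.lt_or_ge ν i with h2 | h2
    · rcases Nat.lt_or_ge (ν + 1) i with h3 | h3
      · -- j ≥ n + 2 : everything zero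
        rw [Tp_coeff_gt (by omega), Tp_coeff_gt (by omega), Tp_coeff_gt (by omega),
          Tp_coeff_gt (by omega), Tp_coeff_gt (by omega)]
        ring
      · -- i = ν + 1, j = n + 1
        have : i = ν + 1 := by omega
        subst this
        rw [show ν + 1 + 1 = ν + 2 by omega]
        rw [Tp_coeff_le (by omega), Tp_coeff_le (by omega), Tp_coeff_gt (by omega),
          Tp_coeff_gt (by omega), Tp_coeff_gt (by omega)]
        have hc := caseC (ν + 1)
        rw [show ν + 1 + 1 = ν + 2 by omega] at hc
        push_cast at hc ⊢
        linear_combination hc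
    · -- i = ν, j = n
      have : i = ν := by omega
      subst this
      rw [Tp_coeff_le (by omega), Tp_coeff_le (by omega), Tp_coeff_le (by omega),
        Tp_coeff_gt (by omega), Tp_coeff_gt (by omega)]
      have hb := caseB i
      push_cast at hb ⊢
      linear_combination hb

lemma coeff_shape (a b u v w : ℝ) (p : Polynomial ℝ) (i : ℕ) :
    ((C a * X + C b) * p + (C u * X ^ 2 + C v * X + C w) * derivative p).coeff i =
      a * (if 1 ≤ i then p.coeff (i - 1) else 0) + b * p.coeff i +
        u * (if 1 ≤ i then ((i : ℝ) - 1) * p.coeff (i - 1) else 0) +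
        v * (i : ℝ) * p.coeff i + w * ((i : ℝ) + 1) * p.coeff (i + 1) := by
  have hX2 : (X ^ 2 : Polynomial ℝ) = X * X := sq X
  simp only [add_mul, hX2, mul_assoc, coeff_add]
  match i with
  | 0 =>
    simp [mul_coeff_zero, coeff_derivative]
    try ring
  | 1 =>
    simp [coeff_X_mul, mul_coeff_zero, coeff_C_mul, coeff_derivative]
    ring
  | (i + 2) =>
    simp only [coeff_C_mul, coeff_X_mul, coeff_derivative,
      show i + 2 - 1 = i + 1 from rfl, if_pos (by omega : 1 ≤ i + 2)]
    push_cast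
    ring

lemma Tp_rec (ν : ℕ) :
    (((ν : ℝ) + 2) ^ 2) • Tp (ν + 2) =
      (C (4 * (2 * ((ν : ℝ) + 1) + 1)) * X +
          C (16 * ((ν : ℝ) + 1) ^ 2 + 8 * ((ν : ℝ) + 1) + 2)) * Tp (ν + 1) +
        (C (4 * (2 * ((ν : ℝ) + 1) + 1)) * X ^ 2 + C (-(16 * ((ν : ℝ) + 1) + 4)) * X +
          C (8 * ((ν : ℝ) + 1))) * derivative (Tp (ν + 1)) -
        C (4 * (16 * ((ν : ℝ) + 1) ^ 2 - 1)) * Tp ν := by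
  ext i
  rw [coeff_sub, coeff_shape, coeff_C_mul, coeff_smul, smul_eq_mul]
  rcases Nat.eq_zero_or_pos i with rfl | hi
  · norm_num
    linear_combination master_zero ν
  · rw [if_pos (show 1 ≤ i from hi), if_pos (show 1 ≤ i from hi)]
    linear_combination master_succ ν i hi


lemma Tp_comp (n : ℕ) : (Tp n).comp (X + 1) = (2 : ℝ) ^ (2 * n) • borosMoll n := by
  rw [borosMoll, smul_smul, mul_inv_cancel₀ (by positivity), one_smul, Tp]
  rw [Polynomial.comp, Polynomial.eval₂_finset_sum]
  refine Finset.sum_congr rfl fun j _ => ?_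
  rw [eval₂_mul, eval₂_C, eval₂_X_pow]
  rfl

lemma P_rec (ν : ℕ) :
    ((((ν : ℝ) + 2) ^ 2) * 2 ^ (2 * ν + 4)) • borosMoll (ν + 2) =
      (2 : ℝ) ^ (2 * ν + 2) •
          ((C (4 * (2 * ((ν : ℝ) + 1) + 1)) * X +
              C (16 * ((ν : ℝ) + 1) ^ 2 + 16 * ((ν : ℝ) + 1) + 6)) * borosMoll (ν + 1) +
            (C (4 * (2 * ((ν : ℝ) + 1) + 1)) * X ^ 2 + C 4 * X + C 0) *
              derivative (borosMoll (ν + 1))) -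
        (2 : ℝ) ^ (2 * ν) •
          (C (4 * (16 * ((ν : ℝ) + 1) ^ 2 - 1)) * borosMoll ν) := by
  have h := congrArg (fun p => p.comp (X + 1)) (Tp_rec ν)
  simp only [smul_comp, add_comp, sub_comp, mul_comp, C_comp, X_comp, pow_comp] at h
  have hd : (derivative (Tp (ν + 1))).comp (X + 1) = derivative ((Tp (ν + 1)).comp (X + 1)) := by
    rw [derivative_comp]
    simp
  rw [hd, Tp_comp, Tp_comp, Tp_comp, derivative_smul] at h
  rw [show 2 * (ν + 2) = 2 * ν + 4 by omega, show 2 * (ν + 1) = 2 * ν + 2 by omega] at h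
  rw [smul_smul, mul_smul_comm, mul_smul_comm, mul_smul_comm] at h
  have h2 : (C (2 : ℝ) : Polynomial ℝ) = 2 := map_ofNat C 2
  have m1 : (C (4 * (2 * ((ν : ℝ) + 1) + 1)) : Polynomial ℝ) * (X + 1) +
      C (16 * ((ν : ℝ) + 1) ^ 2 + 8 * ((ν : ℝ) + 1) + 2) =
      C (4 * (2 * ((ν : ℝ) + 1) + 1)) * X + C (16 * ((ν : ℝ) + 1) ^ 2 + 16 * ((ν : ℝ) + 1) + 6) := by
    have e : (C (16 * ((ν : ℝ) + 1) ^ 2 + 16 * ((ν : ℝ) + 1) + 6) : Polynomial ℝ)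
        = C (4 * (2 * ((ν : ℝ) + 1) + 1)) + C (16 * ((ν : ℝ) + 1) ^ 2 + 8 * ((ν : ℝ) + 1) + 2) := by
      rw [← C_add]
      congr 1
      ring
    rw [e]
    ring
  have m2 : (C (4 * (2 * ((ν : ℝ) + 1) + 1)) : Polynomial ℝ) * (X + 1) ^ 2 +
      C (-(16 * ((ν : ℝ) + 1) + 4)) * (X + 1) + C (8 * ((ν : ℝ) + 1)) =
      C (4 * (2 * ((ν : ℝ) + 1) + 1)) * X ^ 2 + C 4 * X + C 0 := by
    have k1 : (C (4 : ℝ) : Polynomial ℝ) =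
        2 * C (4 * (2 * ((ν : ℝ) + 1) + 1)) + C (-(16 * ((ν : ℝ) + 1) + 4)) := by
      rw [← h2, ← C_mul, ← C_add]
      congr 1
      ring
    have k0 : (C (0 : ℝ) : Polynomial ℝ) =
        C (4 * (2 * ((ν : ℝ) + 1) + 1)) + C (-(16 * ((ν : ℝ) + 1) + 4)) + C (8 * ((ν : ℝ) + 1)) := by
      rw [← C_add, ← C_add]
      congr 1
      ring
    rw [k1, k0]
    ring
  rw [m1, m2] at h
  rw [h, smul_add]

lemma d_rec (ν i : ℕ) :
    4 * ((ν : ℝ) + 2) ^ 2 * (borosMoll (ν + 2)).coeff i =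
      4 * (2 * ((ν : ℝ) + 1) + 1) * (if 1 ≤ i then (borosMoll (ν + 1)).coeff (i - 1) else 0) +
        (16 * ((ν : ℝ) + 1) ^ 2 + 16 * ((ν : ℝ) + 1) + 6) * (borosMoll (ν + 1)).coeff i +
        4 * (2 * ((ν : ℝ) + 1) + 1) *
          (if 1 ≤ i then ((i : ℝ) - 1) * (borosMoll (ν + 1)).coeff (i - 1) else 0) +
        4 * (i : ℝ) * (borosMoll (ν + 1)).coeff i -
        (16 * ((ν : ℝ) + 1) ^ 2 - 1) * (borosMoll ν).coeff i := by
  have h := congrArg (fun p => p.coeff i) (P_rec ν)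
  simp only [coeff_smul, coeff_sub, smul_eq_mul] at h
  rw [coeff_shape, coeff_C_mul] at h
  have h2 : ((2 : ℝ) ^ (2 * ν + 2)) ≠ 0 := by positivity
  apply mul_left_cancel₀ h2
  linear_combination h

lemma dd_zero {n i : ℕ} (h : n < i) : (borosMoll n).coeff i = 0 := by
  rw [borosMoll, coeff_smul, finset_sum_coeff]
  have : ∀ j ∈ Finset.range (n + 1),
      (Polynomial.C ((2 : ℝ) ^ j * (Nat.choose (2 * n - 2 * j) (n - j) : ℝ) *
        (Nat.choose (n + j) j : ℝ)) * (Polynomial.X + 1) ^ j).coeff i = 0 := by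
    intro j hj
    rw [coeff_C_mul, coeff_X_add_one_pow]
    have hji : j < i := by
      simp only [Finset.mem_range] at hj
      omega
    rw [Nat.choose_eq_zero_of_lt hji]
    simp
  rw [Finset.sum_eq_zero this]
  simp

lemma Q_coeff (n i : ℕ) :
    (Q n).coeff i = (borosMoll n).coeff i / (Nat.factorial i : ℝ) := by
  rw [Q, finset_sum_coeff]
  simp only [coeff_C_mul, coeff_X_pow, mul_ite, mul_one, mul_zero]
  rw [Finset.sum_ite_eq (Finset.range (n + 1)) i
    (fun j => (borosMoll n).coeff j / (Nat.factorial j : ℝ))]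
  rcases le_or_gt i n with h | h
  · rw [if_pos (by simp [Nat.lt_succ_iff, h])]
  · rw [if_neg (by simp [Nat.lt_succ_iff]; omega), dd_zero h, zero_div]

lemma coeff_shapeQ (a b z e : ℝ) (p q : Polynomial ℝ) (i : ℕ) :
    ((C a * X + C b) * p - C z * q + C e * X * derivative p).coeff i =
      a * (if 1 ≤ i then p.coeff (i - 1) else 0) + b * p.coeff i - z * q.coeff i +
        e * (i : ℝ) * p.coeff i := by
  simp only [add_mul, mul_assoc, coeff_add, coeff_sub, coeff_C_mul]
  match i with
  | 0 =>
    simp [mul_coeff_zero]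
  | (i + 1) =>
    simp only [coeff_X_mul, coeff_derivative, if_pos (by omega : 1 ≤ i + 1),
      show i + 1 - 1 = i from rfl]
    push_cast
    ring

lemma Q_scaled (ν : ℕ) :
    (4 * (((ν : ℝ) + 1) + 1) ^ 2) • Q (ν + 2) =
      (C (4 * (2 * ((ν : ℝ) + 1) + 1)) * X +
          C (2 * (8 * ((ν : ℝ) + 1) ^ 2 + 8 * ((ν : ℝ) + 1) + 3))) * Q (ν + 1) -
        C ((4 * ((ν : ℝ) + 1) - 1) * (4 * ((ν : ℝ) + 1) + 1)) * Q ν +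
        C 4 * X * derivative (Q (ν + 1)) := by
  ext i
  rw [coeff_shapeQ, coeff_smul, smul_eq_mul]
  simp only [Q_coeff]
  have h := d_rec ν i
  rcases Nat.eq_zero_or_pos i with rfl | hi
  · simp only [if_neg (by omega : ¬ (1 ≤ 0)), Nat.cast_zero, Nat.factorial_zero,
      Nat.cast_one, div_one] at h ⊢
    rw [show ν + 1 + 1 = ν + 2 from rfl]
    linear_combination h
  · obtain ⟨j, rfl⟩ : ∃ j, i = j + 1 := ⟨i - 1, by omega⟩
    simp only [if_pos (by omega : 1 ≤ j + 1), show j + 1 - 1 = j from rfl] at h ⊢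
    rw [show ν + 1 + 1 = ν + 2 from rfl]
    have hfac : ((j + 1).factorial : ℝ) = ((j : ℝ) + 1) * (j.factorial : ℝ) := by
      push_cast [Nat.factorial_succ]
      ring
    have hj : (j.factorial : ℝ) ≠ 0 := by
      exact_mod_cast Nat.factorial_ne_zero j
    have hj1 : ((j : ℝ) + 1) ≠ 0 := by positivity
    rw [hfac]
    have hD : (((j : ℝ) + 1) * (j.factorial : ℝ)) ≠ 0 := mul_ne_zero hj1 hj
    have hBB : (borosMoll (ν + 1)).coeff j / (j.factorial : ℝ) =
        (((j : ℝ) + 1) * (borosMoll (ν + 1)).coeff j) / (((j : ℝ) + 1) * (j.factorial : ℝ)) := by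
      rw [mul_div_mul_left _ _ hj1]
    rw [hBB]
    simp only [← mul_div_assoc]
    simp only [← add_div, ← sub_div]
    rw [div_eq_div_iff hD hD]
    push_cast at h ⊢
    linear_combination (((j : ℝ) + 1) * (j.factorial : ℝ)) * h

end BMAux

set_option maxHeartbeats 1000000 in
/-- For every integer `n ≥ 1`, the polynomials `Q_n` satisfy the recurrence
`Q_{n+1}(x) = ((2n+1)x/(n+1)² + (8n²+8n+3)/(2(n+1)²))·Q_n(x)
 − ((4n−1)(4n+1)/(4(n+1)²))·Q_{n−1}(x) + (x/(n+1)²)·Q_n'(x)`. -/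
theorem Q_recurrence (n : ℕ) (hn : 1 ≤ n) :
    Q (n + 1) =
      (Polynomial.C ((2 * (n : ℝ) + 1) / ((n : ℝ) + 1) ^ 2) * Polynomial.X +
          Polynomial.C ((8 * (n : ℝ) ^ 2 + 8 * (n : ℝ) + 3) / (2 * ((n : ℝ) + 1) ^ 2))) * Q n -
        Polynomial.C ((4 * (n : ℝ) - 1) * (4 * (n : ℝ) + 1) / (4 * ((n : ℝ) + 1) ^ 2)) *
          Q (n - 1) +
        Polynomial.C (1 / ((n : ℝ) + 1) ^ 2) * Polynomial.X *
          Polynomial.derivative (Q n) := by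
  obtain ⟨ν, rfl⟩ : ∃ ν, n = ν + 1 := ⟨n - 1, by omega⟩
  simp only [Nat.add_sub_cancel]
  have h := BMAux.Q_scaled ν
  have hc : (4 * (((ν : ℝ) + 1) + 1) ^ 2) ≠ 0 := by positivity
  have h2 := congrArg (fun p => (4 * (((ν : ℝ) + 1) + 1) ^ 2)⁻¹ • p) h
  simp only [smul_smul, inv_mul_cancel₀ hc, one_smul] at h2
  rw [h2, smul_add, smul_sub, Polynomial.smul_eq_C_mul, Polynomial.smul_eq_C_mul,
    Polynomial.smul_eq_C_mul]
  push_cast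
  have c1 : ((2 * ((ν : ℝ) + 1) + 1) / (((ν : ℝ) + 1) + 1) ^ 2) =
      (4 * (((ν : ℝ) + 1) + 1) ^ 2)⁻¹ * (4 * (2 * ((ν : ℝ) + 1) + 1)) := by
    rw [eq_inv_mul_iff_mul_eq₀ hc]
    field_simp
    try ring
  have c2 : ((8 * ((ν : ℝ) + 1) ^ 2 + 8 * ((ν : ℝ) + 1) + 3) / (2 * (((ν : ℝ) + 1) + 1) ^ 2)) =
      (4 * (((ν : ℝ) + 1) + 1) ^ 2)⁻¹ * (2 * (8 * ((ν : ℝ) + 1) ^ 2 + 8 * ((ν : ℝ) + 1) + 3)) := by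
    rw [eq_inv_mul_iff_mul_eq₀ hc]
    field_simp
    try ring
  have c3 : ((4 * ((ν : ℝ) + 1) - 1) * (4 * ((ν : ℝ) + 1) + 1) / (4 * (((ν : ℝ) + 1) + 1) ^ 2)) =
      (4 * (((ν : ℝ) + 1) + 1) ^ 2)⁻¹ * ((4 * ((ν : ℝ) + 1) - 1) * (4 * ((ν : ℝ) + 1) + 1)) := by
    rw [eq_inv_mul_iff_mul_eq₀ hc]
    field_simp
    try ring
  have c4 : (1 / (((ν : ℝ) + 1) + 1) ^ 2) = (4 * (((ν : ℝ) + 1) + 1) ^ 2)⁻¹ * 4 := by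
    rw [eq_inv_mul_iff_mul_eq₀ hc]
    field_simp
    try ring
  rw [c1, c2, c3, c4]
  simp only [C_mul]
  ring
end

section
/- For every integer n ≥ 1, the polynomials R_n satisfy the recurrence R_{n+1}(x) = ((2n+1)x/((n+1)(n+3)) + (8n^2+8n+7)/(2(n+1)(n+3))) · R_n(x) − ((4n−1)(4n+1)(n−2)/(4n(n+1)(n+3))) · R_{n−1}(x) + (5x/((n+1)(n+3))) · R_n'(x). -/
open Polynomial

open Polynomial Finset


/-- auxiliary coefficient `2^j * C(2n-2j, n-j) * C(n+j, j)` as a real number -/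
noncomputable def bmAux (n j : ℕ) : ℝ :=
  (2 : ℝ) ^ j * ((2 * n - 2 * j).choose (n - j) : ℝ) * ((n + j).choose j : ℝ)

lemma bmAux_cb (m : ℕ) :
    ((m : ℝ) + 1) * ((2 * m + 2).choose (m + 1) : ℝ)
      = 2 * (2 * (m : ℝ) + 1) * ((2 * m).choose m : ℝ) := by
  have h := Nat.succ_mul_centralBinom_succ m
  simp only [Nat.centralBinom] at h
  have h2 : 2 * (m + 1) = 2 * m + 2 := by omega
  rw [h2] at h
  exact_mod_cast congrArg (Nat.cast (R := ℝ)) h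

lemma bmAux_rowcast (N k : ℕ) (h : k ≤ N) :
    ((N : ℝ) + 1) * ((N.choose k : ℝ)) = ((N + 1).choose k : ℝ) * ((N : ℝ) + 1 - k) := by
  have h1 := Nat.add_one_mul_choose_eq N k
  have h2 := Nat.choose_succ_right_eq (N + 1) k
  -- (N+1) * C(N,k) = C(N+1,k+1)*(k+1) = C(N+1,k)*(N+1-k)
  have h3 : (N + 1) * N.choose k = (N + 1).choose k * (N + 1 - k) := by
    rw [Nat.add_one_mul_choose_eq, Nat.choose_succ_right_eq]
  have h4 : ((N:ℝ) + 1 - k) = ((N + 1 - k : ℕ) : ℝ) := by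
    push_cast [Nat.cast_sub (by omega : k ≤ N + 1)]; ring
  rw [h4]
  exact_mod_cast congrArg (Nat.cast (R := ℝ)) h3

/-- column step: `(m+1)(j+m+1)·A(j+m+1, j) = 2(2m+1)(2j+m+1)·A(j+m, j)` -/
lemma bmAux_col (j m : ℕ) :
    ((m:ℝ) + 1) * ((j:ℝ) + m + 1) * bmAux (j + m + 1) j
      = 2 * (2 * (m:ℝ) + 1) * (2 * (j:ℝ) + m + 1) * bmAux (j + m) j := by
  have e1 : 2 * (j + m + 1) - 2 * j = 2 * m + 2 := by omega
  have e2 : (j + m + 1) - j = m + 1 := by omega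
  have e3 : (j + m + 1) + j = 2 * j + m + 1 := by omega
  have e4 : 2 * (j + m) - 2 * j = 2 * m := by omega
  have e5 : (j + m) - j = m := by omega
  have e6 : (j + m) + j = 2 * j + m := by omega
  unfold bmAux
  rw [e1, e2, e3, e4, e5, e6]
  have hA := bmAux_cb m
  have hB : ((2 * j + (m:ℝ)) + 1) * ((2 * j + m).choose j : ℝ)
      = ((2 * j + m + 1).choose j : ℝ) * ((2 * j + (m:ℝ)) + 1 - j) := by
    have := bmAux_rowcast (2 * j + m) j (by omega)
    push_cast at this ⊢; linarith [this]
  have hC : ((2 * j + (m:ℝ)) + 1 - j) = (j:ℝ) + m + 1 := by ring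
  rw [hC] at hB
  push_cast at hA hB ⊢
  linear_combination ((2:ℝ)^j * (((j:ℝ)+m+1) * ((2*j+m+1).choose j : ℝ))) * hA
    - ((2:ℝ)^j * (2*(2*(m:ℝ)+1) * ((2*m).choose m : ℝ))) * hB

/-- row step: `(2m+1)(j+1)·A(j+m+1, j+1) = (m+1)(2j+m+2)·A(j+m+1, j)` -/
lemma bmAux_row (j m : ℕ) :
    (2 * (m:ℝ) + 1) * ((j:ℝ) + 1) * bmAux (j + m + 1) (j + 1)
      = ((m:ℝ) + 1) * (2 * (j:ℝ) + m + 2) * bmAux (j + m + 1) j := by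
  have e1 : 2 * (j + m + 1) - 2 * (j + 1) = 2 * m := by omega
  have e2 : (j + m + 1) - (j + 1) = m := by omega
  have e3 : (j + m + 1) + (j + 1) = 2 * j + m + 2 := by omega
  have e4 : 2 * (j + m + 1) - 2 * j = 2 * m + 2 := by omega
  have e5 : (j + m + 1) - j = m + 1 := by omega
  have e6 : (j + m + 1) + j = 2 * j + m + 1 := by omega
  unfold bmAux
  rw [e1, e2, e3, e4, e5, e6]
  have hA := bmAux_cb m
  have hN3 : ((j:ℝ) + 1) * ((2 * j + m + 2).choose (j + 1) : ℝ)
      = (2 * (j:ℝ) + m + 2) * ((2 * j + m + 1).choose j : ℝ) := by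
    have h := Nat.add_one_mul_choose_eq (2 * j + m + 1) j
    have : (2 * j + m + 1 + 1) * (2 * j + m + 1).choose j
        = (2 * j + m + 2).choose (j + 1) * (j + 1) := by
      simpa using h
    have := congrArg (Nat.cast (R := ℝ)) this
    push_cast at this ⊢; linarith
  push_cast at hA hN3 ⊢
  linear_combination ((2:ℝ)^j * (2 * (2*(m:ℝ)+1) * ((2*m).choose m : ℝ))) * hN3
    - ((2:ℝ)^j * ((2*(j:ℝ)+m+2) * ((2*j+m+1).choose j : ℝ))) * hA

/-- top step: `(n+1)·A(n+1,n+1) = 4(2n+1)·A(n,n)` -/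
lemma bmAux_top (n : ℕ) :
    ((n:ℝ) + 1) * bmAux (n + 1) (n + 1) = 4 * (2 * (n:ℝ) + 1) * bmAux n n := by
  have e1 : 2 * (n + 1) - 2 * (n + 1) = 0 := by omega
  have e2 : (n + 1) - (n + 1) = 0 := by omega
  have e3 : (n + 1) + (n + 1) = 2 * n + 2 := by omega
  have e4 : 2 * n - 2 * n = 0 := by omega
  have e5 : n - n = 0 := by omega
  have e6 : n + n = 2 * n := by omega
  unfold bmAux
  rw [e1, e2, e3, e4, e5, e6]
  have hA := bmAux_cb n
  have hs : ((2*n+2).choose (n+1) : ℝ) = ((2*n+2).choose (n+1) : ℝ) := rfl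
  simp only [Nat.choose_zero_right, Nat.cast_one]
  push_cast at hA ⊢
  linear_combination ((2:ℝ)^(n+1)) * hA

/-- the polynomial `S_n(t) = ∑_j A(n,j) t^j` -/
noncomputable def bmS (n : ℕ) : Polynomial ℝ :=
  ∑ j ∈ Finset.range (n + 1), Polynomial.C (bmAux n j) * Polynomial.X ^ j

lemma coeff_bmS (n k : ℕ) :
    (bmS n).coeff k = if k ≤ n then bmAux n k else 0 := by
  unfold bmS
  rw [finset_sum_coeff]
  simp only [C_mul_X_pow_eq_monomial, coeff_monomial]
  rw [Finset.sum_ite_eq' (Finset.range (n+1)) k (fun j => bmAux n j)]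
  simp [Nat.lt_succ_iff]

lemma comp_bmS (n : ℕ) :
    (bmS n).comp (Polynomial.X + 1) = Polynomial.C ((2:ℝ)^(2*n)) * borosMoll n := by
  unfold bmS borosMoll
  rw [Polynomial.smul_eq_C_mul, ← mul_assoc, ← Polynomial.C_mul,
    mul_inv_cancel₀ (by positivity), Polynomial.C_1, one_mul]
  rw [Polynomial.comp, Polynomial.eval₂_finset_sum]
  refine Finset.sum_congr rfl fun j hj => ?_
  simp only [Polynomial.eval₂_mul, Polynomial.eval₂_C, Polynomial.eval₂_X_pow]
  rw [bmAux]

set_option maxHeartbeats 2000000 in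
lemma bmS_rec (p : ℕ) :
    Polynomial.C (((p:ℝ)+2)*((p:ℝ)+4)) * Polynomial.C (((2:ℝ)^(2*p+4))⁻¹) * bmS (p+2)
  = Polynomial.C ((2*(p:ℝ)+3)) * Polynomial.C (((2:ℝ)^(2*p+2))⁻¹) * (Polynomial.derivative (bmS (p+1)) * Polynomial.X^2)
  + Polynomial.C ((-1 - 4*(p:ℝ))) * Polynomial.C (((2:ℝ)^(2*p+2))⁻¹) * (Polynomial.derivative (bmS (p+1)) * Polynomial.X^1)
  + Polynomial.C ((2*(p:ℝ) - 2)) * Polynomial.C (((2:ℝ)^(2*p+2))⁻¹) * Polynomial.derivative (bmS (p+1))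
  + Polynomial.C (3*(2*(p:ℝ)+3)) * Polynomial.C (((2:ℝ)^(2*p+2))⁻¹) * (bmS (p+1) * Polynomial.X^1)
  + Polynomial.C ((8*((p:ℝ)+1)^2 - 4*((p:ℝ)+1) + 1)/2) * Polynomial.C (((2:ℝ)^(2*p+2))⁻¹) * bmS (p+1)
  - Polynomial.C ((4*(p:ℝ)+3)*(4*(p:ℝ)+5)*((p:ℝ)-1)/(4*((p:ℝ)+1))) * Polynomial.C (((2:ℝ)^(2*p))⁻¹) * bmS p := by
  have hw4 : ((2:ℝ)^(2*p+4))⁻¹ = ((2:ℝ)^(2*p+2))⁻¹ / 4 := by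
    rw [show 2*p+4 = (2*p+2)+2 by omega, pow_add]
    norm_num
    ring
  have hw0 : ((2:ℝ)^(2*p))⁻¹ = 4 * ((2:ℝ)^(2*p+2))⁻¹ := by
    have h : (2:ℝ)^(2*p+2) = 2^(2*p) * 4 := by rw [pow_add]; norm_num
    rw [h, mul_inv]
    field_simp
  ext k
  simp only [mul_assoc, coeff_C_mul, coeff_add, coeff_sub, coeff_mul_X_pow', coeff_derivative,
    coeff_bmS, hw4, hw0]
  by_cases h1 : k ≤ p
  · obtain ⟨m, rfl⟩ : ∃ m, p = k + m := ⟨p - k, by omega⟩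
    have hE1 := bmAux_col k (m+1)
    rw [show k+(m+1)+1 = k+m+2 by omega, show k+(m+1) = k+m+1 by omega] at hE1
    have hE2 := bmAux_row k m
    have hE3 := bmAux_col k m
    rcases k with _|j
    · -- k = 0
      split_ifs <;> try omega
      push_cast at hE1 hE2 hE3 ⊢
      have hv : (4*((m:ℝ)+1)) * (4*((m:ℝ)+1))⁻¹ = 1 := mul_inv_cancel₀ (by positivity)
      have hne : (4*((m:ℝ)+1)) * (((m:ℝ)+2)*((m:ℝ)+2)*(2*(m:ℝ)+1)*((m:ℝ)+1)) ≠ 0 := by positivity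
      refine mul_left_cancel₀ hne ?_
      linear_combination
        ((4:ℝ)*(((m:ℝ)+2)*((m:ℝ)+2)*(2*(m:ℝ)+1)*((m:ℝ)+1))*((4*(m:ℝ)+3)*(4*(m:ℝ)+5)*((m:ℝ)-1))*((2:ℝ)^(2*(0+m)+2))⁻¹*(bmAux (0+m) 0)) * hv
        + (((2:ℝ)^(2*(0+m)+2))⁻¹ * (((m:ℝ)+1)*((m:ℝ)+2)*((m:ℝ)+4)*(2*(m:ℝ)+1)*((m:ℝ)+1))) * hE1
        + (((2:ℝ)^(2*(0+m)+2))⁻¹ * (-((m:ℝ)+2)*((m:ℝ)+2)*((m:ℝ)+1)*(4*((m:ℝ)+1)*(2*((m:ℝ)+1)+1)-20*((m:ℝ)+1)))) * hE2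
        + (((2:ℝ)^(2*(0+m)+2))⁻¹ * (-2*(4*((m:ℝ)+1)-1)*(4*((m:ℝ)+1)+1)*(((m:ℝ)+1)-2)*((m:ℝ)+2)*((m:ℝ)+2))) * hE3
    · have hE4 := bmAux_row j (m+1)
      rw [show j+(m+1)+1 = j+m+2 by omega] at hE4
      rcases j with _|j2
      · -- k = 1
        split_ifs <;> try omega
        rw [show 0+m+2 = 1+m+1 by omega] at hE4
        push_cast at hE1 hE2 hE3 hE4 ⊢
        have hv : (4*((m:ℝ)+2)) * (4*((m:ℝ)+2))⁻¹ = 1 := mul_inv_cancel₀ (by positivity)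
        have hne : (4*((m:ℝ)+2)) * (((m:ℝ)+2)*((m:ℝ)+3)*(2*(m:ℝ)+1)*((m:ℝ)+3)) ≠ 0 := by positivity
        refine mul_left_cancel₀ hne ?_
        linear_combination
          ((4:ℝ)*(((m:ℝ)+2)*((m:ℝ)+3)*(2*(m:ℝ)+1)*((m:ℝ)+3))*((4*(m:ℝ)+7)*(4*(m:ℝ)+9)*((m:ℝ)))*((2:ℝ)^(2*(1+m)+2))⁻¹*(bmAux (1+m) 1)) * hv
          + (((2:ℝ)^(2*(1+m)+2))⁻¹ * (((m:ℝ)+2)*((m:ℝ)+3)*((m:ℝ)+5)*(2*(m:ℝ)+1)*((m:ℝ)+3))) * hE1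
          + (((2:ℝ)^(2*(1+m)+2))⁻¹ * (-((m:ℝ)+2)*((m:ℝ)+3)*((m:ℝ)+3)*(4*((m:ℝ)+2)*(2*((m:ℝ)+2)+1)-20*((m:ℝ)+2)))) * hE2
          + (((2:ℝ)^(2*(1+m)+2))⁻¹ * (-2*(4*((m:ℝ)+2)-1)*(4*((m:ℝ)+2)+1)*(((m:ℝ)+2)-2)*((m:ℝ)+2)*((m:ℝ)+3))) * hE3
          + (((2:ℝ)^(2*(1+m)+2))⁻¹ * (12*((m:ℝ)+2)*(2*((m:ℝ)+2)+1)*((m:ℝ)+3)*(2*(m:ℝ)+1))) * hE4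
      · -- k = j2+2
        split_ifs <;> try omega
        rw [show j2+1+m+2 = j2+2+m+1 by omega] at hE4
        push_cast at hE1 hE2 hE3 hE4 ⊢
        have hv : (4*((j2:ℝ)+m+3)) * (4*((j2:ℝ)+m+3))⁻¹ = 1 := mul_inv_cancel₀ (by positivity)
        have hne : (4*((j2:ℝ)+m+3)) * (((m:ℝ)+2)*((j2:ℝ)+m+4)*(2*(m:ℝ)+1)*(2*(j2:ℝ)+m+5)) ≠ 0 := by positivity
        refine mul_left_cancel₀ hne ?_
        linear_combination
          ((4:ℝ)*(((m:ℝ)+2)*((j2:ℝ)+m+4)*(2*(m:ℝ)+1)*(2*(j2:ℝ)+m+5))*((4*((j2:ℝ)+m+2)+3)*(4*((j2:ℝ)+m+2)+5)*((j2:ℝ)+m+1))*((2:ℝ)^(2*(j2+2+m)+2))⁻¹*(bmAux (j2+2+m) (j2+2))) * hv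
          + (((2:ℝ)^(2*(j2+2+m)+2))⁻¹ * (((j2:ℝ)+m+3)*((j2:ℝ)+m+4)*((j2:ℝ)+m+6)*(2*(m:ℝ)+1)*(2*(j2:ℝ)+m+5))) * hE1
          + (((2:ℝ)^(2*(j2+2+m)+2))⁻¹ * (-((m:ℝ)+2)*((j2:ℝ)+m+4)*(2*(j2:ℝ)+m+5)*(4*((j2:ℝ)+m+3)*(2*((j2:ℝ)+m+3)+1)-20*((j2:ℝ)+m+3)))) * hE2
          + (((2:ℝ)^(2*(j2+2+m)+2))⁻¹ * (-2*(4*((j2:ℝ)+m+3)-1)*(4*((j2:ℝ)+m+3)+1)*(((j2:ℝ)+m+3)-2)*((m:ℝ)+2)*((j2:ℝ)+m+4))) * hE3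
          + (((2:ℝ)^(2*(j2+2+m)+2))⁻¹ * (4*((j2:ℝ)+m+3)*(2*((j2:ℝ)+m+3)+1)*((j2:ℝ)+4)*((j2:ℝ)+m+4)*(2*(m:ℝ)+1))) * hE4
  · by_cases h2 : k = p + 1
    · subst h2
      rcases p with _|q
      · -- p = 0, k = 1 : numeric
        norm_num [bmAux]
      · -- p = q+1, k = q+2
        have e1 : q+1+1-2+1 = q+1 := by omega
        have e2 : q+1+1-2 = q := by omega
        have e3 : q+1+1-1+1 = q+2 := by omega
        have e4 : q+1+1-1 = q+1 := by omega
        rw [e1, e2, e3, e4]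
        split_ifs <;> try omega
        simp only [show q+1+1 = q+2 by omega, show q+1+2 = q+3 by omega]
        have hcol := bmAux_col (q+2) 0
        have hrow := bmAux_row (q+1) 0
        rw [show q+2+0+1 = q+3 by omega, show q+2+0 = q+2 by omega] at hcol
        rw [show q+1+0+1 = q+2 by omega] at hrow
        push_cast at hcol hrow ⊢
        have hne : (4*((q:ℝ)+2)) ≠ 0 := by positivity
        refine mul_left_cancel₀ hne ?_
        linear_combination (((2:ℝ)^(2*(q+1)+2))⁻¹*(((q:ℝ)+2)*((q:ℝ)+5))) * hcol
          + (((2:ℝ)^(2*(q+1)+2))⁻¹*(2*(2*((q:ℝ)+2)+1)*((q:ℝ)+4))) * hrow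
    · by_cases h3 : k = p + 2
      · subst h3
        split_ifs <;> try omega
        simp only [show p+1+1 = p+2 by omega, show p+2-2 = p by omega, show p+2-2+1 = p+1 by omega,
          show p+2-1 = p+1 by omega]
        have htop := bmAux_top (p+1)
        rw [show p+1+1 = p+2 by omega] at htop
        push_cast at htop ⊢
        linear_combination (((p:ℝ)+4) * ((2:ℝ)^(2*p+2))⁻¹/4) * htop
      · -- k ≥ p + 3 : everything vanishes
        split_ifs <;> first | omega | ring

lemma bm_rec (p : ℕ) :
    Polynomial.C (((p:ℝ)+2)*((p:ℝ)+4)) * borosMoll (p+2)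
  = Polynomial.C (2*(p:ℝ)+3) * (Polynomial.derivative (borosMoll (p+1)) * Polynomial.X^2)
  + Polynomial.C (5:ℝ) * (Polynomial.derivative (borosMoll (p+1)) * Polynomial.X^1)
  + Polynomial.C (3*(2*(p:ℝ)+3)) * (borosMoll (p+1) * Polynomial.X^1)
  + Polynomial.C ((8*((p:ℝ)+1)^2+8*((p:ℝ)+1)+7)/2) * borosMoll (p+1)
  - Polynomial.C ((4*(p:ℝ)+3)*(4*(p:ℝ)+5)*((p:ℝ)-1)/(4*((p:ℝ)+1))) * borosMoll p := by
  have h := congrArg (fun q : Polynomial ℝ => q.comp (Polynomial.X + 1)) (bmS_rec p)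
  simp only [Polynomial.sub_comp, Polynomial.add_comp, Polynomial.mul_comp, Polynomial.C_comp,
    Polynomial.pow_comp, Polynomial.X_comp] at h
  have hd : (Polynomial.derivative (bmS (p+1))).comp (Polynomial.X + 1)
      = Polynomial.C ((2:ℝ)^(2*(p+1))) * Polynomial.derivative (borosMoll (p+1)) := by
    have h1 := Polynomial.derivative_comp (bmS (p+1)) (Polynomial.X + 1)
    simp only [Polynomial.derivative_add, Polynomial.derivative_X, Polynomial.derivative_one,
      add_zero, one_mul] at h1
    rw [← h1, comp_bmS, Polynomial.derivative_C_mul]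
  rw [comp_bmS, comp_bmS, comp_bmS, hd] at h
  rw [show 2*(p+2) = 2*p+4 by omega, show 2*(p+1) = 2*p+2 by omega] at h
  have hv4 : Polynomial.C (((2:ℝ)^(2*p+4))⁻¹) * Polynomial.C ((2:ℝ)^(2*p+4)) = 1 := by
    rw [← Polynomial.C_mul, inv_mul_cancel₀ (by positivity), Polynomial.C_1]
  have hv2 : Polynomial.C (((2:ℝ)^(2*p+2))⁻¹) * Polynomial.C ((2:ℝ)^(2*p+2)) = 1 := by
    rw [← Polynomial.C_mul, inv_mul_cancel₀ (by positivity), Polynomial.C_1]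
  have hv0 : Polynomial.C (((2:ℝ)^(2*p))⁻¹) * Polynomial.C ((2:ℝ)^(2*p)) = 1 := by
    rw [← Polynomial.C_mul, inv_mul_cancel₀ (by positivity), Polynomial.C_1]
  have h' : Polynomial.C (((p:ℝ)+2)*((p:ℝ)+4)) * borosMoll (p+2)
      = Polynomial.C (2*(p:ℝ)+3) * (Polynomial.derivative (borosMoll (p+1)) * (Polynomial.X+1)^2)
      + Polynomial.C (-1-4*(p:ℝ)) * (Polynomial.derivative (borosMoll (p+1)) * (Polynomial.X+1)^1)
      + Polynomial.C (2*(p:ℝ)-2) * Polynomial.derivative (borosMoll (p+1))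
      + Polynomial.C (3*(2*(p:ℝ)+3)) * (borosMoll (p+1) * (Polynomial.X+1)^1)
      + Polynomial.C ((8*((p:ℝ)+1)^2-4*((p:ℝ)+1)+1)/2) * borosMoll (p+1)
      - Polynomial.C ((4*(p:ℝ)+3)*(4*(p:ℝ)+5)*((p:ℝ)-1)/(4*((p:ℝ)+1))) * borosMoll p := by
    linear_combination h
      - (Polynomial.C (((p:ℝ)+2)*((p:ℝ)+4)) * borosMoll (p+2)) * hv4
      + (Polynomial.C (2*(p:ℝ)+3) * (Polynomial.derivative (borosMoll (p+1)) * (Polynomial.X+1)^2)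
        + Polynomial.C (-1-4*(p:ℝ)) * (Polynomial.derivative (borosMoll (p+1)) * (Polynomial.X+1)^1)
        + Polynomial.C (2*(p:ℝ)-2) * Polynomial.derivative (borosMoll (p+1))
        + Polynomial.C (3*(2*(p:ℝ)+3)) * (borosMoll (p+1) * (Polynomial.X+1)^1)
        + Polynomial.C ((8*((p:ℝ)+1)^2-4*((p:ℝ)+1)+1)/2) * borosMoll (p+1)) * hv2
      - (Polynomial.C ((4*(p:ℝ)+3)*(4*(p:ℝ)+5)*((p:ℝ)-1)/(4*((p:ℝ)+1))) * borosMoll p) * hv0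
  have hc1 : (2:Polynomial ℝ) * Polynomial.C (2*(p:ℝ)+3) + Polynomial.C (-1-4*(p:ℝ))
      = Polynomial.C (5:ℝ) := by
    rw [two_mul, ← Polynomial.C_add, ← Polynomial.C_add]
    congr 1
    ring
  have hc2 : Polynomial.C (2*(p:ℝ)+3) + Polynomial.C (-1-4*(p:ℝ)) + Polynomial.C (2*(p:ℝ)-2)
      = 0 := by
    rw [← Polynomial.C_add, ← Polynomial.C_add, show (2*(p:ℝ)+3) + (-1-4*(p:ℝ)) + (2*(p:ℝ)-2) = 0 by ring,
      Polynomial.C_0]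
  have hc3 : Polynomial.C (3*(2*(p:ℝ)+3)) + Polynomial.C ((8*((p:ℝ)+1)^2-4*((p:ℝ)+1)+1)/2)
      = Polynomial.C ((8*((p:ℝ)+1)^2+8*((p:ℝ)+1)+7)/2) := by
    rw [← Polynomial.C_add]
    congr 1
    ring
  linear_combination h' + (Polynomial.derivative (borosMoll (p+1)) * Polynomial.X^1) * hc1
    + Polynomial.derivative (borosMoll (p+1)) * hc2 + borosMoll (p+1) * hc3

lemma coeff_borosMoll_zero (n i : ℕ) (h : n < i) : (borosMoll n).coeff i = 0 := by
  unfold borosMoll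
  rw [Polynomial.coeff_smul, Polynomial.finset_sum_coeff]
  simp only [Polynomial.coeff_C_mul, Polynomial.coeff_X_add_one_pow]
  rw [Finset.sum_congr rfl (fun j hj => ?_), Finset.sum_const_zero, smul_zero]
  have hz : j.choose i = 0 := Nat.choose_eq_zero_of_lt (by simp [Nat.lt_succ_iff] at hj; omega)
  rw [hz, Nat.cast_zero, mul_zero]

lemma coeff_R (m i : ℕ) :
    (R m).coeff i = (borosMoll m).coeff i / ((i+2).factorial : ℝ) := by
  unfold R
  rw [Polynomial.finset_sum_coeff]
  simp only [Polynomial.C_mul_X_pow_eq_monomial, Polynomial.coeff_monomial]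
  rw [Finset.sum_ite_eq' (Finset.range (m+1)) i]
  by_cases h : i ≤ m
  · rw [if_pos (by simpa [Nat.lt_succ_iff] using h)]
  · rw [if_neg (by simpa [Nat.lt_succ_iff] using h), coeff_borosMoll_zero m i (by omega), zero_div]

/-- For every integer `n ≥ 1`, the polynomials `R_n` satisfy the recurrence
`R_{n+1}(x) = ((2n+1)x/((n+1)(n+3)) + (8n²+8n+7)/(2(n+1)(n+3)))·R_n(x)
 − ((4n−1)(4n+1)(n−2)/(4n(n+1)(n+3)))·R_{n−1}(x) + (5x/((n+1)(n+3)))·R_n'(x)`. -/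
theorem R_recurrence (n : ℕ) (hn : 1 ≤ n) :
    R (n + 1) =
      (Polynomial.C ((2 * (n : ℝ) + 1) / (((n : ℝ) + 1) * ((n : ℝ) + 3))) * Polynomial.X +
          Polynomial.C ((8 * (n : ℝ) ^ 2 + 8 * (n : ℝ) + 7) /
            (2 * ((n : ℝ) + 1) * ((n : ℝ) + 3)))) * R n -
        Polynomial.C ((4 * (n : ℝ) - 1) * (4 * (n : ℝ) + 1) * ((n : ℝ) - 2) /
            (4 * (n : ℝ) * ((n : ℝ) + 1) * ((n : ℝ) + 3))) * R (n - 1) +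
        Polynomial.C (5 / (((n : ℝ) + 1) * ((n : ℝ) + 3))) * Polynomial.X *
          Polynomial.derivative (R n) := by
  obtain ⟨p, rfl⟩ : ∃ p, n = p + 1 := ⟨n - 1, by omega⟩
  simp only [Nat.add_sub_cancel]
  have key := bm_rec p
  rw [show ∀ (a b c d : ℝ) (u v w : Polynomial ℝ),
      (Polynomial.C a * Polynomial.X + Polynomial.C b) * u - Polynomial.C c * v
        + Polynomial.C d * Polynomial.X * w
      = Polynomial.C a * (u * Polynomial.X^1) + Polynomial.C b * u - Polynomial.C c * v
        + Polynomial.C d * (w * Polynomial.X^1) from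
    fun a b c d u v w => by ring]
  ext i
  have hc := congrArg (fun q : Polynomial ℝ => q.coeff i) key
  simp only [Polynomial.coeff_add, Polynomial.coeff_sub, Polynomial.coeff_C_mul,
    Polynomial.coeff_mul_X_pow', Polynomial.coeff_derivative] at hc
  simp only [Polynomial.coeff_add, Polynomial.coeff_sub, Polynomial.coeff_C_mul,
    Polynomial.coeff_mul_X_pow', Polynomial.coeff_derivative, coeff_R]
  rcases i with _|_|j
  · -- i = 0
    norm_num at hc ⊢
    have h1 : ((p:ℝ)+1) ≠ 0 := by positivity
    have h2 : ((p:ℝ)+2) ≠ 0 := by positivity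
    have h4 : ((p:ℝ)+4) ≠ 0 := by positivity
    field_simp at hc ⊢
    linear_combination hc
  · -- i = 1
    norm_num [Nat.factorial] at hc ⊢
    have h1 : ((p:ℝ)+1) ≠ 0 := by positivity
    have h2 : ((p:ℝ)+2) ≠ 0 := by positivity
    have h4 : ((p:ℝ)+4) ≠ 0 := by positivity
    field_simp at hc ⊢
    linear_combination hc
  · -- i = j+2
    split_ifs <;> try omega
    push_cast at hc ⊢
    have h1 : ((p:ℝ)+1) ≠ 0 := by positivity
    have h2 : ((p:ℝ)+2) ≠ 0 := by positivity
    have h4 : ((p:ℝ)+4) ≠ 0 := by positivity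
    have hf2 : (((j+1+1+2).factorial:ℝ)) = ((j:ℝ)+4) * ((j+1+2).factorial:ℝ) := by
      rw [show j+1+1+2 = (j+1+2)+1 by omega, Nat.factorial_succ]
      push_cast; ring
    have hfne : (((j+1+2).factorial:ℝ)) ≠ 0 := by positivity
    rw [hf2]
    field_simp at hc ⊢
    linear_combination hc
end

section
/- For every integer n ≥ 1 and every integer i with 0 ≤ i ≤ n+1, the Boros-Moll coefficients satisfy 4(n+1)^2 · d_i(n+1) = 2(8n^2 + 8n + 3 + 2i) · d_i(n) + 4i(2n+1) · d_{i−1}(n) − (16n^2 − 1) · d_i(n−1), where d_j(m) is taken to be 0 whenever j < 0 or j > m. -/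
open Polynomial

noncomputable def aR (n j : ℕ) : ℝ :=
  if j ≤ n then 2^j * ((2*(n-j)).choose (n-j) : ℝ) * ((n+j).choose j : ℝ) else 0

lemma cb_succ (t : ℕ) : ((t:ℝ)+1) * ((2*t+2).choose (t+1) : ℝ) = 2*(2*(t:ℝ)+1) * ((2*t).choose t : ℝ) := by
  have h1 : (2*t+1) * (2*t).choose t = (2*t+1).choose (t+1) * (t+1) := Nat.add_one_mul_choose_eq (2*t) t
  have h2 : (2*t+1).choose (t+1) = (2*t+1).choose t := Nat.choose_symm_half t
  have h3 : (2*t+2).choose (t+1) = (2*t+1).choose t + (2*t+1).choose (t+1) :=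
    Nat.choose_succ_succ (2*t+1) t
  have h1' : (2*(t:ℝ)+1) * ((2*t).choose t : ℝ) = ((2*t+1).choose (t+1) : ℝ) * ((t:ℝ)+1) := by
    exact_mod_cast h1
  have h2' : ((2*t+1).choose (t+1) : ℝ) = ((2*t+1).choose t : ℝ) := by exact_mod_cast h2
  have h3' : ((2*t+2).choose (t+1) : ℝ) = ((2*t+1).choose t : ℝ) + ((2*t+1).choose (t+1) : ℝ) := by
    exact_mod_cast h3
  linear_combination (-2:ℝ)*h1' - (((t:ℝ)+1))*h2' + ((t:ℝ)+1)*h3'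

lemma cc_top (a k : ℕ) : ((a:ℝ)+1) * ((a+1+k).choose k : ℝ) = ((a:ℝ)+1+k) * ((a+k).choose k : ℝ) := by
  have h := Nat.choose_mul_succ_eq (a+k) k
  rw [show a+k+1 = a+1+k by omega, show a+1+k-k = a+1 by omega] at h
  have h' : ((a+k).choose k : ℝ) * ((a:ℝ)+1+k) = ((a+1+k).choose k : ℝ) * ((a:ℝ)+1) := by
    exact_mod_cast h
  linarith

lemma cc_bot (a b : ℕ) : ((b:ℝ)+1) * ((a+b+1).choose (b+1) : ℝ) = ((a:ℝ)+1) * ((a+b+1).choose b : ℝ) := by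
  have h := Nat.choose_succ_right_eq (a+b+1) b
  rw [show a+b+1-b = a+1 by omega] at h
  have h' : ((a+b+1).choose (b+1) : ℝ) * ((b:ℝ)+1) = ((a+b+1).choose b : ℝ) * ((a:ℝ)+1) := by
    exact_mod_cast h
  linarith

lemma key_interior_pos (s t : ℕ) :
    ((s:ℝ)+(t:ℝ)+2+1)^2 * aR (s+t+2+1) (s+1)
      = (16*((s:ℝ)+(t:ℝ)+2)^2+8*((s:ℝ)+(t:ℝ)+2)+2-(16*((s:ℝ)+(t:ℝ)+2)+4)*((s:ℝ)+1)) * aR (s+t+2) (s+1)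
        + 4*(2*((s:ℝ)+(t:ℝ)+2)+1)*((s:ℝ)+1) * aR (s+t+2) (s+1-1)
        + 8*((s:ℝ)+(t:ℝ)+2)*(((s:ℝ)+1)+1) * aR (s+t+2) (s+1+1)
        - 4*(16*((s:ℝ)+(t:ℝ)+2)^2-1) * aR (s+t+2-1) (s+1) := by
  have hA : aR (s+t+2+1) (s+1)
      = 2^(s+1) * ((2*t+4).choose (t+2) : ℝ) * ((2*s+t+4).choose (s+1) : ℝ) := by
    rw [aR, if_pos (by omega), show s+t+2+1-(s+1) = t+2 by omega,
      show 2*(t+2) = 2*t+4 by ring, show s+t+2+1+(s+1) = 2*s+t+4 by omega]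
  have hB : aR (s+t+2) (s+1)
      = 2^(s+1) * ((2*t+2).choose (t+1) : ℝ) * ((2*s+t+3).choose (s+1) : ℝ) := by
    rw [aR, if_pos (by omega), show s+t+2-(s+1) = t+1 by omega,
      show 2*(t+1) = 2*t+2 by ring, show s+t+2+(s+1) = 2*s+t+3 by omega]
  have hC : aR (s+t+2) (s+1-1)
      = 2^s * ((2*t+4).choose (t+2) : ℝ) * ((2*s+t+2).choose s : ℝ) := by
    rw [show s+1-1 = s by omega, aR, if_pos (by omega), show s+t+2-s = t+2 by omega,
      show 2*(t+2) = 2*t+4 by ring, show s+t+2+s = 2*s+t+2 by omega]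
  have hD : aR (s+t+2) (s+1+1)
      = 2^(s+2) * ((2*t).choose t : ℝ) * ((2*s+t+4).choose (s+2) : ℝ) := by
    rw [show s+1+1 = s+2 by omega, aR, if_pos (by omega), show s+t+2-(s+2) = t by omega,
      show s+t+2+(s+2) = 2*s+t+4 by omega]
  have hE : aR (s+t+2-1) (s+1)
      = 2^(s+1) * ((2*t).choose t : ℝ) * ((2*s+t+2).choose (s+1) : ℝ) := by
    rw [show s+t+2-1 = s+t+1 by omega, aR, if_pos (by omega),
      show s+t+1-(s+1) = t by omega, show s+t+1+(s+1) = 2*s+t+2 by omega]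
  rw [hA, hB, hC, hD, hE]
  have Rb1 := cb_succ t
  have Rb2 := cb_succ (t+1)
  rw [show 2*(t+1)+2 = 2*t+4 by ring, show t+1+1 = t+2 by ring, show 2*(t+1) = 2*t+2 by ring] at Rb2
  push_cast at Rb2
  have Rc6 := cc_top (s+t+1) (s+1)
  rw [show s+t+1+1+(s+1) = 2*s+t+3 by omega, show s+t+1+(s+1) = 2*s+t+2 by omega] at Rc6
  push_cast at Rc6
  have Rc3 := cc_top (s+t+2) (s+1)
  rw [show s+t+2+1+(s+1) = 2*s+t+4 by omega, show s+t+2+(s+1) = 2*s+t+3 by omega] at Rc3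
  push_cast at Rc3
  have e6 := cc_bot (s+t+1) s
  rw [show s+t+1+s+1 = 2*s+t+2 by omega] at e6
  push_cast at e6
  have Rc5 := cc_bot (s+t+2) (s+1)
  rw [show s+t+2+(s+1)+1 = 2*s+t+4 by omega, show s+1+1 = s+2 by omega] at Rc5
  push_cast at Rc5
  have eb2 : ((t:ℝ)+1)*((t:ℝ)+2) * ((2*t+4).choose (t+2) : ℝ)
      = 4*(2*(t:ℝ)+3)*(2*(t:ℝ)+1) * ((2*t).choose t : ℝ) := by
    linear_combination ((t:ℝ)+1)*Rb2 + 2*(2*(t:ℝ)+3)*Rb1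
  have e2 : ((s:ℝ)+1) * ((2*s+t+3).choose (s+1) : ℝ)
      = (2*(s:ℝ)+(t:ℝ)+3) * ((2*s+t+2).choose s : ℝ) := by
    apply mul_left_cancel₀ (show ((s:ℝ)+(t:ℝ)+2) ≠ 0 by positivity)
    linear_combination ((s:ℝ)+1)*Rc6 + (2*(s:ℝ)+(t:ℝ)+3)*e6
  have e3 : ((s:ℝ)+1)*((s:ℝ)+(t:ℝ)+3) * ((2*s+t+4).choose (s+1) : ℝ)
      = (2*(s:ℝ)+(t:ℝ)+4)*(2*(s:ℝ)+(t:ℝ)+3) * ((2*s+t+2).choose s : ℝ) := by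
    linear_combination ((s:ℝ)+1)*Rc3 + (2*(s:ℝ)+(t:ℝ)+4)*e2
  have e5 : ((s:ℝ)+1)*((s:ℝ)+2) * ((2*s+t+4).choose (s+2) : ℝ)
      = (2*(s:ℝ)+(t:ℝ)+4)*(2*(s:ℝ)+(t:ℝ)+3) * ((2*s+t+2).choose s : ℝ) := by
    linear_combination ((s:ℝ)+1)*Rc5 + e3
  -- division forms
  have hb1 : ((2*t+2).choose (t+1) : ℝ)
      = 2*(2*(t:ℝ)+1) * ((2*t).choose t : ℝ) / ((t:ℝ)+1) := by
    rw [eq_div_iff (by positivity)]; linarith [Rb1]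
  have hb2 : ((2*t+4).choose (t+2) : ℝ)
      = 4*(2*(t:ℝ)+3)*(2*(t:ℝ)+1) * ((2*t).choose t : ℝ) / (((t:ℝ)+1)*((t:ℝ)+2)) := by
    rw [eq_div_iff (by positivity)]; linarith [eb2]
  have hc6 : ((2*s+t+2).choose (s+1) : ℝ)
      = ((s:ℝ)+(t:ℝ)+2) * ((2*s+t+2).choose s : ℝ) / ((s:ℝ)+1) := by
    rw [eq_div_iff (by positivity)]; linarith [e6]
  have hc2 : ((2*s+t+3).choose (s+1) : ℝ)
      = (2*(s:ℝ)+(t:ℝ)+3) * ((2*s+t+2).choose s : ℝ) / ((s:ℝ)+1) := by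
    rw [eq_div_iff (by positivity)]; linarith [e2]
  have hc3 : ((2*s+t+4).choose (s+1) : ℝ)
      = (2*(s:ℝ)+(t:ℝ)+4)*(2*(s:ℝ)+(t:ℝ)+3) * ((2*s+t+2).choose s : ℝ)
        / (((s:ℝ)+1)*((s:ℝ)+(t:ℝ)+3)) := by
    rw [eq_div_iff (by positivity)]; linarith [e3]
  have hc5 : ((2*s+t+4).choose (s+2) : ℝ)
      = (2*(s:ℝ)+(t:ℝ)+4)*(2*(s:ℝ)+(t:ℝ)+3) * ((2*s+t+2).choose s : ℝ)
        / (((s:ℝ)+1)*((s:ℝ)+2)) := by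
    rw [eq_div_iff (by positivity)]; linarith [e5]
  rw [hb1, hb2, hc6, hc2, hc3, hc5]
  have h1 : ((t:ℝ)+1) ≠ 0 := by positivity
  have h2 : ((t:ℝ)+2) ≠ 0 := by positivity
  have h3 : ((s:ℝ)+1) ≠ 0 := by positivity
  have h4 : ((s:ℝ)+2) ≠ 0 := by positivity
  have h5 : ((s:ℝ)+(t:ℝ)+3) ≠ 0 := by positivity
  field_simp
  ring

lemma key_interior_zero (t : ℕ) :
    ((t:ℝ)+1+1)^2 * aR (t+1+1) 0
      = (16*((t:ℝ)+1)^2+8*((t:ℝ)+1)+2) * aR (t+1) 0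
        + 8*((t:ℝ)+1) * aR (t+1) 1
        - 4*(16*((t:ℝ)+1)^2-1) * aR t 0 := by
  have hA : aR (t+1+1) 0 = ((2*t+4).choose (t+2) : ℝ) := by
    rw [aR, if_pos (by omega), show t+1+1-0 = t+2 by omega, show 2*(t+2) = 2*t+4 by ring]
    simp
  have hB : aR (t+1) 0 = ((2*t+2).choose (t+1) : ℝ) := by
    rw [aR, if_pos (by omega), show t+1-0 = t+1 by omega, show 2*(t+1) = 2*t+2 by ring]
    simp
  have hD : aR (t+1) 1 = 2 * ((2*t).choose t : ℝ) * ((t:ℝ)+2) := by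
    rw [aR, if_pos (by omega), show t+1-1 = t by omega, show t+1+1 = t+2 by ring,
      Nat.choose_one_right]
    push_cast; ring
  have hE : aR t 0 = ((2*t).choose t : ℝ) := by
    rw [aR, if_pos (by omega), show t-0 = t by omega]
    simp
  rw [hA, hB, hD, hE]
  have Rb1 := cb_succ t
  have Rb2 := cb_succ (t+1)
  rw [show 2*(t+1)+2 = 2*t+4 by ring, show t+1+1 = t+2 by ring,
    show 2*(t+1) = 2*t+2 by ring] at Rb2
  push_cast at Rb2
  have eb2 : ((t:ℝ)+1)*((t:ℝ)+2) * ((2*t+4).choose (t+2) : ℝ)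
      = 4*(2*(t:ℝ)+3)*(2*(t:ℝ)+1) * ((2*t).choose t : ℝ) := by
    linear_combination ((t:ℝ)+1)*Rb2 + 2*(2*(t:ℝ)+3)*Rb1
  have hb1 : ((2*t+2).choose (t+1) : ℝ)
      = 2*(2*(t:ℝ)+1) * ((2*t).choose t : ℝ) / ((t:ℝ)+1) := by
    rw [eq_div_iff (by positivity)]; linarith [Rb1]
  have hb2 : ((2*t+4).choose (t+2) : ℝ)
      = 4*(2*(t:ℝ)+3)*(2*(t:ℝ)+1) * ((2*t).choose t : ℝ) / (((t:ℝ)+1)*((t:ℝ)+2)) := by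
    rw [eq_div_iff (by positivity)]; linarith [eb2]
  rw [hb1, hb2]
  have h1 : ((t:ℝ)+1) ≠ 0 := by positivity
  have h2 : ((t:ℝ)+2) ≠ 0 := by positivity
  field_simp
  ring

lemma key_top (s : ℕ) :
    ((s:ℝ)+1+1)^2 * aR (s+1+1) (s+1)
      = (16*((s:ℝ)+1)^2+8*((s:ℝ)+1)+2-(16*((s:ℝ)+1)+4)*((s:ℝ)+1)) * aR (s+1) (s+1)
        + 4*(2*((s:ℝ)+1)+1)*((s:ℝ)+1) * aR (s+1) (s+1-1)
        + 8*((s:ℝ)+1)*(((s:ℝ)+1)+1) * aR (s+1) (s+1+1)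
        - 4*(16*((s:ℝ)+1)^2-1) * aR (s+1-1) (s+1) := by
  have hA : aR (s+1+1) (s+1) = 2^(s+1) * 2 * ((2*s+3).choose (s+1) : ℝ) := by
    rw [aR, if_pos (by omega), show s+1+1-(s+1) = 1 by omega,
      show s+1+1+(s+1) = 2*s+3 by omega]
    norm_num
  have hB : aR (s+1) (s+1) = 2^(s+1) * ((2*s+2).choose (s+1) : ℝ) := by
    rw [aR, if_pos (by omega), show s+1-(s+1) = 0 by omega,
      show s+1+(s+1) = 2*s+2 by omega]
    norm_num
  have hC : aR (s+1) (s+1-1) = 2^s * 2 * ((2*s+1).choose s : ℝ) := by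
    rw [show s+1-1 = s by omega, aR, if_pos (by omega), show s+1-s = 1 by omega,
      show s+1+s = 2*s+1 by omega]
    norm_num
  have hD : aR (s+1) (s+1+1) = 0 := by rw [aR, if_neg (by omega)]
  have hE : aR (s+1-1) (s+1) = 0 := by rw [aR, if_neg (by omega)]
  rw [hA, hB, hC, hD, hE]
  have r1 : (2*s+2) * (2*s+1).choose s = (2*s+2).choose (s+1) * (s+1) := by
    have := Nat.add_one_mul_choose_eq (2*s+1) s
    rwa [show 2*s+1+1 = 2*s+2 by omega] at this
  have r2 : (2*s+3) * (2*s+2).choose (s+1) = (2*s+3).choose (s+1) * (s+2) := by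
    have h := Nat.add_one_mul_choose_eq (2*s+2) (s+1)
    have h2 := Nat.choose_symm_half (s+1)
    rw [show 2*(s+1)+1 = 2*s+3 by ring, show (s+1)+1 = s+2 by ring] at h2
    rwa [show 2*s+2+1 = 2*s+3 by omega, show s+1+1 = s+2 by omega, h2] at h
  have r1' : (2*(s:ℝ)+2) * ((2*s+1).choose s : ℝ) = ((2*s+2).choose (s+1) : ℝ) * ((s:ℝ)+1) := by
    exact_mod_cast r1
  have r2' : (2*(s:ℝ)+3) * ((2*s+2).choose (s+1) : ℝ) = ((2*s+3).choose (s+1) : ℝ) * ((s:ℝ)+2) := by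
    exact_mod_cast r2
  have hcC : ((2*s+1).choose s : ℝ) = ((2*s+2).choose (s+1) : ℝ) * ((s:ℝ)+1) / (2*(s:ℝ)+2) := by
    rw [eq_div_iff (by positivity)]; linarith [r1']
  have hcA : ((2*s+3).choose (s+1) : ℝ) = (2*(s:ℝ)+3) * ((2*s+2).choose (s+1) : ℝ) / ((s:ℝ)+2) := by
    rw [eq_div_iff (by positivity)]; linarith [r2']
  rw [hcC, hcA]
  have h1 : ((s:ℝ)+2) ≠ 0 := by positivity
  have h2 : (2*(s:ℝ)+2) ≠ 0 := by positivity
  field_simp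
  ring

lemma keyIdentity (n k : ℕ) (hn : 1 ≤ n) :
    ((n:ℝ)+1)^2 * aR (n+1) k
      = (16*(n:ℝ)^2+8*(n:ℝ)+2-(16*(n:ℝ)+4)*(k:ℝ)) * aR n k
        + 4*(2*(n:ℝ)+1)*(k:ℝ) * aR n (k-1)
        + 8*(n:ℝ)*((k:ℝ)+1) * aR n (k+1)
        - 4*(16*(n:ℝ)^2-1) * aR (n-1) k := by
  rcases Nat.lt_or_ge k n with hk | hk
  · rcases k with _ | s
    · obtain ⟨t, rfl⟩ : ∃ t, n = t+1 := ⟨n-1, by omega⟩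
      have h := key_interior_zero t
      rw [show t+1-1 = t by omega]
      push_cast
      push_cast at h
      linarith [h]
    · obtain ⟨t, rfl⟩ : ∃ t, n = s+t+2 := ⟨n-s-2, by omega⟩
      have h := key_interior_pos s t
      push_cast at h ⊢
      linarith [h]
  · rcases Nat.lt_or_ge (n+1) k with hk2 | hk2
    · rw [aR, if_neg (by omega), aR, if_neg (by omega), aR, if_neg (by omega),
        aR, if_neg (by omega), aR, if_neg (by omega)]
      ring
    · rcases Nat.eq_or_lt_of_le hk with hkn | hkn
      · -- k = n
        obtain ⟨s, rfl⟩ : ∃ s, n = s+1 := ⟨n-1, by omega⟩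
        obtain rfl : k = s+1 := by omega
        have h := key_top s
        push_cast at h ⊢
        linarith [h]
      · -- k = n+1
        obtain rfl : k = n+1 := by omega
        have hA : aR (n+1) (n+1) = 2^(n+1) * ((2*n+2).choose (n+1) : ℝ) := by
          rw [aR, if_pos (by omega), show n+1-(n+1) = 0 by omega,
            show n+1+(n+1) = 2*n+2 by omega]
          norm_num
        have hB : aR n (n+1) = 0 := by rw [aR, if_neg (by omega)]
        have hC : aR n (n+1-1) = 2^n * ((2*n).choose n : ℝ) := by
          rw [show n+1-1 = n by omega, aR, if_pos (by omega), show n-n = 0 by omega,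
            show n+n = 2*n by omega]
          norm_num
        have hD : aR n (n+1+1) = 0 := by rw [aR, if_neg (by omega)]
        have hE : aR (n-1) (n+1) = 0 := by rw [aR, if_neg (by omega)]
        rw [hA, hB, hC, hD, hE]
        have h := cb_succ n
        push_cast
        linear_combination (2:ℝ)^(n+1)*((n:ℝ)+1)*h

noncomputable def T (n : ℕ) : Polynomial ℝ :=
  ∑ j ∈ Finset.range (n+1), C (aR n j) * X^j

lemma coeff_T (n k : ℕ) : (T n).coeff k = aR n k := by
  rw [T, finset_sum_coeff]
  simp only [coeff_C_mul, coeff_X_pow, mul_ite, mul_one, mul_zero]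
  rw [Finset.sum_ite_eq (Finset.range (n+1)) k (fun j => aR n j)]
  by_cases h : k ≤ n
  · simp [Finset.mem_range, Nat.lt_succ_of_le h]
  · simp [Finset.mem_range, h, aR, show ¬ k < n+1 by omega]

lemma borosMoll_eq (n : ℕ) : borosMoll n = ((2:ℝ)^(2*n))⁻¹ • (T n).comp (X+1) := by
  rw [borosMoll, T]
  congr 1
  simp only [Polynomial.comp]
  rw [Polynomial.eval₂_finset_sum]
  refine Finset.sum_congr rfl fun j hj => ?_
  rw [Finset.mem_range] at hj
  have hjn : j ≤ n := by omega
  rw [eval₂_mul, eval₂_C, eval₂_X_pow]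
  congr 2
  simp [aR, hjn, show 2*n - 2*j = 2*(n-j) by omega]

lemma T_comp (n : ℕ) : (T n).comp (X+1) = (2:ℝ)^(2*n) • borosMoll n := by
  rw [borosMoll_eq, smul_smul, mul_inv_cancel₀ (by positivity), one_smul]

lemma coeff_X_mul' (p : Polynomial ℝ) (k : ℕ) :
    (X * p).coeff k = if k = 0 then 0 else p.coeff (k-1) := by
  rcases k with _ | k
  · simp [mul_coeff_zero]
  · simp [coeff_X_mul]

lemma polyIdentity (n : ℕ) (hn : 1 ≤ n) :
    (((n:ℝ)+1)^2) • T (n+1)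
      = C (16*(n:ℝ)^2+8*(n:ℝ)+2) * T n
        + C (4*(2*(n:ℝ)+1)) * (X * T n)
        + C (8*(n:ℝ)) * derivative (T n)
        - C (16*(n:ℝ)+4) * (X * derivative (T n))
        + C (4*(2*(n:ℝ)+1)) * (X^2 * derivative (T n))
        - C (4*(16*(n:ℝ)^2-1)) * T (n-1) := by
  ext k
  have hXX : ∀ (p : Polynomial ℝ) (k : ℕ), (X^2 * p).coeff k
      = if k ≤ 1 then 0 else p.coeff (k-2) := by
    intro p k
    rw [show (X^2 * p : Polynomial ℝ) = X * (X * p) by ring, coeff_X_mul', ]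
    rcases k with _ | k
    · simp
    · rw [if_neg (by omega), coeff_X_mul']
      rcases k with _ | k
      · simp
      · rw [if_neg (by omega), if_neg (by omega)]
        congr 1
  simp only [coeff_smul, coeff_add, coeff_sub, coeff_C_mul, smul_eq_mul, coeff_X_mul', hXX,
    coeff_derivative, coeff_T]
  rcases k with _ | k
  · simp only [if_pos rfl, if_pos (by omega : (0:ℕ) ≤ 1)]
    have h := keyIdentity n 0 hn
    push_cast at h ⊢
    linarith [h]
  · rcases k with _ | k
    · simp only [if_neg (by omega : ¬ (1:ℕ) = 0), if_pos (by omega : (1:ℕ) ≤ 1),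
        show (1:ℕ)-1 = 0 by omega]
      have h := keyIdentity n 1 hn
      rw [show (1:ℕ)-1 = 0 by omega] at h
      push_cast at h ⊢
      linarith [h]
    · simp only [if_neg (by omega : ¬ (k+2:ℕ) = 0), if_neg (by omega : ¬ (k+2:ℕ) ≤ 1),
        show (k+2:ℕ)-1 = k+1 by omega, show (k+2:ℕ)-2 = k by omega]
      have h := keyIdentity n (k+2) hn
      rw [show (k+2:ℕ)-1 = k+1 by omega] at h
      push_cast at h ⊢
      linarith [h]

lemma d_rec (m k : ℕ) :
    4*((m:ℝ)+2)^2 * (borosMoll (m+2)).coeff k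
      = 2*(8*((m:ℝ)+1)^2+8*((m:ℝ)+1)+3+2*(k:ℝ)) * (borosMoll (m+1)).coeff k
        + 4*(k:ℝ)*(2*((m:ℝ)+1)+1) * (if k = 0 then 0 else (borosMoll (m+1)).coeff (k-1))
        - (16*((m:ℝ)+1)^2-1) * (borosMoll m).coeff k := by
  have hn : 1 ≤ m+1 := by omega
  have H := congrArg (fun p : Polynomial ℝ => p.comp (X+1)) (polyIdentity (m+1) hn)
  simp only [smul_comp, add_comp, sub_comp, mul_comp, C_comp, X_comp, pow_comp] at H
  have hD : (derivative (T (m+1))).comp (X+1) = derivative ((T (m+1)).comp (X+1)) := by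
    rw [derivative_comp]; simp
  rw [show m+1-1 = m by omega] at H
  simp only [hD, T_comp] at H
  have H2 := congrArg (fun p : Polynomial ℝ => p.coeff k) H
  simp only [derivative_smul] at H2
  simp only [coeff_smul, coeff_add, coeff_sub, coeff_C_mul, smul_eq_mul] at H2
  have e1 : ∀ (p : Polynomial ℝ), (X+1) * p = X * p + p := by intro p; ring
  have e2 : ∀ (p : Polynomial ℝ), (X+1)^2 * p = X * (X * p) + 2 * (X * p) + p := by
    intro p; ring
  simp only [e1, e2, coeff_add, coeff_X_mul', two_mul, coeff_derivative, coeff_smul,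
    smul_eq_mul] at H2
  have hpow : ((2:ℝ)^(2*m)) ≠ 0 := by positivity
  apply mul_left_cancel₀ hpow
  rcases k with _ | j
  · simp only [if_pos rfl] at H2 ⊢
    push_cast at H2 ⊢
    linear_combination (1/4 : ℝ) * H2
  · simp only [if_neg (Nat.succ_ne_zero j), show j+1-1 = j by omega] at H2 ⊢
    rcases j with _ | j
    · simp only [if_pos rfl] at H2
      push_cast at H2 ⊢
      linear_combination (1/4 : ℝ) * H2
    · simp only [if_neg (Nat.succ_ne_zero j), show j+1-1 = j by omega] at H2
      push_cast at H2 ⊢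
      linear_combination (1/4 : ℝ) * H2

/-- For every `n ≥ 1` and every integer `0 ≤ i ≤ n+1`:
`4(n+1)²·d_i(n+1) = 2(8n²+8n+3+2i)·d_i(n) + 4i(2n+1)·d_{i−1}(n) − (16n²−1)·d_i(n−1)`. -/
theorem bmCoeff_four_term_recurrence (n : ℕ) (hn : 1 ≤ n) (i : ℤ)
    (hi0 : 0 ≤ i) (hi1 : i ≤ (n : ℤ) + 1) :
    4 * ((n : ℝ) + 1) ^ 2 * bmCoeff i (n + 1) =
      2 * (8 * (n : ℝ) ^ 2 + 8 * (n : ℝ) + 3 + 2 * (i : ℝ)) * bmCoeff i n +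
        4 * (i : ℝ) * (2 * (n : ℝ) + 1) * bmCoeff (i - 1) n -
        (16 * (n : ℝ) ^ 2 - 1) * bmCoeff i (n - 1) := by
  obtain ⟨m, rfl⟩ : ∃ m, n = m+1 := ⟨n-1, by omega⟩
  have hK : ((i.toNat : ℕ) : ℝ) = (i : ℝ) := by exact_mod_cast Int.toNat_of_nonneg hi0
  have h := d_rec m i.toNat
  rw [show m+1-1 = m by omega]
  rw [show m+1+1 = m+2 by omega]
  simp only [bmCoeff, if_pos hi0]
  rcases eq_or_lt_of_le hi0 with h0 | h1
  · -- i = 0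
    have hi : i = 0 := h0.symm
    subst hi
    simp only [Int.toNat_zero] at h hK ⊢
    rw [if_neg (by omega : ¬ (0:ℤ) ≤ 0 - 1)]
    rw [if_true] at h
    push_cast at h ⊢
    linarith [h]
  · -- 1 ≤ i
    rw [if_pos (by omega : (0:ℤ) ≤ i - 1)]
    have ht : (i-1).toNat = i.toNat - 1 := by omega
    have hK0 : i.toNat ≠ 0 := by omega
    rw [ht]
    rw [if_neg hK0] at h
    push_cast at h ⊢
    rw [hK] at h
    linarith [h]
end

section
/- For every integer n ≥ 1 and every integer i with 0 ≤ i ≤ n, the Boros-Moll coefficients satisfy d_i(n+1) = ((8n^2 + 8n + 3 − 4i^2)/(2(n+1−i)(n+1))) · d_i(n) − ((n+i)(4n−1)(4n+1)/(4n(n+1)(n+1−i))) · d_i(n−1), where d_j(m) is taken to be 0 whenever j < 0 or j > m. -/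
open Polynomial
open Finset

namespace BM

noncomputable def c (n j : ℕ) : ℝ :=
  2 ^ j * ((2 * n - 2 * j).choose (n - j) : ℝ) * ((n + j).choose j : ℝ)

lemma coeff_borosMoll (n i : ℕ) :
    (borosMoll n).coeff i
      = ((2:ℝ) ^ (2*n))⁻¹ * ∑ j ∈ Finset.range (n+1), c n j * (j.choose i : ℝ) := by
  unfold borosMoll c
  rw [Polynomial.coeff_smul, Polynomial.finset_sum_coeff]
  simp only [smul_eq_mul, Polynomial.coeff_C_mul, Polynomial.coeff_X_add_one_pow]

lemma c_cast (n j : ℕ) (h : j ≤ n) :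
    c n j = 2^j * ((2*(n-j)).factorial / ((n-j).factorial * (n-j).factorial) : ℝ)
      * ((n+j).factorial / (j.factorial * n.factorial) : ℝ) := by
  unfold c
  rw [show 2*n - 2*j = 2*(n-j) by omega,
    Nat.cast_choose ℝ (by omega : n - j ≤ 2*(n-j)),
    Nat.cast_choose ℝ (by omega : j ≤ n + j),
    show 2*(n-j) - (n-j) = n - j by omega, show n + j - j = n by omega]

lemma R1 (j k : ℕ) : ((j:ℝ) - k) * (j.choose k : ℝ) = ((k:ℝ)+1) * (j.choose (k+1) : ℝ) := by
  rcases le_or_gt k j with h | h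
  · have := Nat.choose_succ_right_eq j k
    have h2 : ((j.choose (k+1) : ℝ)) * ((k:ℝ)+1) = (j.choose k : ℝ) * ((j:ℝ) - k) := by
      have := congrArg (fun x : ℕ => (x : ℝ)) this
      push_cast [Nat.cast_sub h] at this
      linarith [this]
    linarith
  · rw [Nat.choose_eq_zero_of_lt h, Nat.choose_eq_zero_of_lt (by omega)]
    simp

lemma R2 (j k : ℕ) : (j:ℝ) * ((j-1).choose (k+1) : ℝ) = ((j:ℝ) - ((k:ℝ)+1)) * (j.choose (k+1) : ℝ) := by
  cases j with
  | zero => simp [Nat.choose_eq_zero_of_lt]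
  | succ s =>
    rcases le_or_gt (k+1) (s+1) with h | h
    · have := Nat.choose_mul_succ_eq s (k+1)
      have := congrArg (fun x : ℕ => (x : ℝ)) this
      push_cast [Nat.cast_sub (show k ≤ s by omega)] at this
      simp only [Nat.add_sub_cancel]
      push_cast
      linarith [this]
    · rw [Nat.choose_eq_zero_of_lt h, show (s+1)-1 = s by omega,
        Nat.choose_eq_zero_of_lt (by omega)]
      simp


lemma fact_cast_succ (m : ℕ) : ((m+1).factorial : ℝ) = ((m:ℝ)+1) * (m.factorial : ℝ) := by
  rw [Nat.factorial_succ]; push_cast; ring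

lemma fact_ne (m : ℕ) : ((m.factorial : ℝ)) ≠ 0 := by
  exact_mod_cast (Nat.factorial_pos m).ne'

lemma T1 (a j : ℕ) :
    ((a:ℝ)+j+2) * c (a+j+2) (j+1)
      = 4*((a:ℝ)+2*j+2) * c (a+j+1) j + 2*(2*(a:ℝ)+1) * c (a+j+1) (j+1) := by
  rw [c_cast _ _ (by omega), c_cast _ _ (by omega), c_cast _ _ (by omega)]
  rw [show a+j+2 - (j+1) = a+1 by omega, show a+j+2+(j+1) = a+2*j+2+1 by omega,
    show a+j+1 - j = a+1 by omega, show a+j+1+j = a+2*j+1 by omega,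
    show a+j+1 - (j+1) = a by omega, show a+j+1+(j+1) = a+2*j+1+1 by omega,
    show 2*(a+1) = 2*a+1+1 by omega]
  rw [fact_cast_succ (2*a+1), fact_cast_succ (2*a), fact_cast_succ (a+2*j+2),
    fact_cast_succ (a+2*j+1), fact_cast_succ (a+j+1), fact_cast_succ a,
    fact_cast_succ j, pow_succ]
  have h1 := fact_ne a
  have h2 := fact_ne j
  have h3 := fact_ne (a+j+1)
  have h4 := fact_ne (a+2*j+1)
  have h5 := fact_ne (2*a)
  field_simp
  push_cast
  ring

lemma T0 (n : ℕ) : ((n:ℝ)+1) * c (n+1) 0 = 2*(2*(n:ℝ)+1) * c n 0 := by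
  rw [c_cast _ _ (by omega), c_cast _ _ (by omega)]
  rw [show (n+1) - 0 = n+1 by omega, show (n+1)+0 = n+1 by omega,
    show n - 0 = n by omega, show n + 0 = n by omega, show 2*(n+1) = 2*n+1+1 by omega]
  rw [fact_cast_succ (2*n+1), fact_cast_succ (2*n), fact_cast_succ n]
  have h1 := fact_ne n
  have h5 := fact_ne (2*n)
  have h0 := fact_ne 0
  field_simp
  push_cast
  ring

lemma T1b (n : ℕ) : ((n:ℝ)+1) * c (n+1) (n+1) = 4*(2*(n:ℝ)+1) * c n n := by
  rw [c_cast _ _ (by omega), c_cast _ _ (by omega)]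
  rw [show (n+1) - (n+1) = 0 by omega, show (n+1)+(n+1) = 2*n+1+1 by omega,
    show n - n = 0 by omega, show n + n = 2*n by omega, show 2*0 = 0 by omega]
  rw [fact_cast_succ (2*n+1), fact_cast_succ (2*n), fact_cast_succ n, pow_succ]
  have h1 := fact_ne n
  have h5 := fact_ne (2*n)
  have h0 := fact_ne 0
  field_simp
  push_cast
  ring

lemma U0 (m : ℕ) :
    4*(16*((m:ℝ)+1)^2-1) * c m 0
      = 2*((m:ℝ)+1)*(6*(m:ℝ)+7) * c (m+1) 0 + 8*((m:ℝ)+1) * c (m+1) 1 := by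
  rw [c_cast _ _ (by omega), c_cast _ _ (by omega), c_cast _ _ (by omega)]
  rw [show m - 0 = m by omega, show m + 0 = m by omega,
    show (m+1) - 0 = m+1 by omega, show (m+1) + 0 = m+1 by omega,
    show (m+1) - 1 = m by omega, show (m+1) + 1 = m+1+1 by omega,
    show 2*(m+1) = 2*m+1+1 by omega]
  rw [fact_cast_succ (2*m+1), fact_cast_succ (2*m), fact_cast_succ (m+1),
    fact_cast_succ m]
  have h1 := fact_ne m
  have h2 := fact_ne (2*m)
  have h0 := fact_ne 0
  have h3 := fact_ne 1
  field_simp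
  push_cast
  ring

lemma Ub (m : ℕ) : c (m+1) (m+1) = 2 * c (m+1) m := by
  rw [c_cast _ _ (by omega), c_cast _ _ (by omega)]
  rw [show (m+1) - (m+1) = 0 by omega, show (m+1)+(m+1) = 2*m+1+1 by omega,
    show (m+1) - m = 1 by omega, show (m+1)+m = 2*m+1 by omega,
    show 2*0 = 0 by omega, show 2*1 = 1+1 by omega]
  rw [fact_cast_succ (2*m+1), fact_cast_succ (2*m), fact_cast_succ m,
    fact_cast_succ 1, pow_succ]
  have h1 := fact_ne m
  have h2 := fact_ne (2*m)
  have h0 := fact_ne 0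
  have h3 := fact_ne 1
  field_simp
  push_cast
  ring

lemma U1 (a b : ℕ) :
    4*(16*((a:ℝ)+b+2)^2-1) * c (a+b+1) (b+1)
      = -4*((a:ℝ)+b+2)*((a:ℝ)+2) * c (a+b+2) b
        + 2*((a:ℝ)+b+2)*(6*(a:ℝ)+7) * c (a+b+2) (b+1)
        + 8*((a:ℝ)+b+2)*((b:ℝ)+2) * c (a+b+2) (b+2) := by
  rw [c_cast _ _ (by omega), c_cast _ _ (by omega), c_cast _ _ (by omega),
    c_cast _ _ (by omega)]
  rw [show (a+b+1) - (b+1) = a by omega, show (a+b+1)+(b+1) = a+2*b+1+1 by omega,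
    show (a+b+2) - b = a+1+1 by omega, show (a+b+2)+b = a+2*b+1+1 by omega,
    show (a+b+2) - (b+1) = a+1 by omega, show (a+b+2)+(b+1) = a+2*b+2+1 by omega,
    show (a+b+2) - (b+2) = a by omega, show (a+b+2)+(b+2) = a+2*b+3+1 by omega,
    show 2*(a+1+1) = 2*a+3+1 by omega, show 2*(a+1) = 2*a+1+1 by omega]
  rw [fact_cast_succ (2*a+3), show (2*a+3 : ℕ) = 2*a+2+1 by omega,
    fact_cast_succ (2*a+2), show (2*a+2 : ℕ) = 2*a+1+1 by omega,
    fact_cast_succ (2*a+1), fact_cast_succ (2*a),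
    fact_cast_succ (a+2*b+3), show (a+2*b+3 : ℕ) = a+2*b+2+1 by omega,
    fact_cast_succ (a+2*b+2), show (a+2*b+2 : ℕ) = a+2*b+1+1 by omega,
    fact_cast_succ (a+2*b+1),
    fact_cast_succ (a+1), fact_cast_succ a,
    fact_cast_succ (b+1), fact_cast_succ b,
    show (a+b+2:ℕ) = a+b+1+1 by omega, fact_cast_succ (a+b+1)]
  have h1 := fact_ne a
  have h2 := fact_ne (2*a)
  have h3 := fact_ne b
  have h4 := fact_ne (a+2*b+1)
  have h5 := fact_ne (a+b+1)
  field_simp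
  push_cast
  ring

lemma T1' (n j : ℕ) (hj : j ≤ n) :
    ((n:ℝ)+1) * c (n+1) (j+1)
      = 4*((n:ℝ)+j+1)*c n j + (if j < n then 2*(2*(n:ℝ)-2*j-1) * c n (j+1) else 0) := by
  rcases lt_or_eq_of_le hj with h | h
  · obtain ⟨a, rfl⟩ : ∃ a, n = a + j + 1 := ⟨n - j - 1, by omega⟩
    rw [if_pos h]
    have ht := T1 a j
    rw [show a+j+2 = a+j+1+1 by omega] at ht
    push_cast at ht ⊢
    linear_combination ht
  · subst h
    rw [if_neg (lt_irrefl j)]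
    have ht := T1b j
    push_cast at ht ⊢
    linear_combination ht

lemma L1 (n : ℕ) (f : ℕ → ℝ) :
    ∑ j ∈ range (n+2), ((n:ℝ)+1) * c (n+1) j * f j
      = ∑ j ∈ range (n+1), c n j * (4*((n:ℝ)+j+1) * f (j+1) + 2*(2*(n:ℝ)+1-2*j) * f j) := by
  have hL : ∑ j ∈ range (n+2), ((n:ℝ)+1) * c (n+1) j * f j
      = (∑ j ∈ range (n+1), 4*((n:ℝ)+j+1)*c n j*f (j+1))
        + ((∑ j ∈ range n, 2*(2*(n:ℝ)-2*j-1) * c n (j+1) * f (j+1))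
            + 2*(2*(n:ℝ)+1) * c n 0 * f 0) := by
    rw [Finset.sum_range_succ' (fun j => ((n:ℝ)+1) * c (n+1) j * f j) (n+1)]
    have e1 : ∀ j ∈ range (n+1), ((n:ℝ)+1) * c (n+1) (j+1) * f (j+1)
        = 4*((n:ℝ)+j+1)*c n j*f (j+1)
          + (if j < n then 2*(2*(n:ℝ)-2*j-1) * c n (j+1) * f (j+1) else 0) := by
      intro j hj
      rw [mem_range] at hj
      rw [T1' n j (by omega)]
      split_ifs <;> ring
    rw [Finset.sum_congr rfl e1, Finset.sum_add_distrib]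
    have e2 : ∑ j ∈ range (n+1),
        (if j < n then 2*(2*(n:ℝ)-2*j-1) * c n (j+1) * f (j+1) else 0)
        = ∑ j ∈ range n, 2*(2*(n:ℝ)-2*j-1) * c n (j+1) * f (j+1) := by
      rw [Finset.sum_range_succ, if_neg (lt_irrefl n), add_zero]
      exact Finset.sum_congr rfl fun j hj => if_pos (mem_range.mp hj)
    rw [e2, T0, add_assoc]
  have hR : ∑ j ∈ range (n+1), c n j * (4*((n:ℝ)+j+1) * f (j+1) + 2*(2*(n:ℝ)+1-2*j) * f j)
      = (∑ j ∈ range (n+1), 4*((n:ℝ)+j+1)*c n j*f (j+1))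
        + ((∑ j ∈ range n, 2*(2*(n:ℝ)-2*j-1) * c n (j+1) * f (j+1))
            + 2*(2*(n:ℝ)+1) * c n 0 * f 0) := by
    have e3 : ∀ j ∈ range (n+1), c n j * (4*((n:ℝ)+j+1) * f (j+1) + 2*(2*(n:ℝ)+1-2*j) * f j)
        = 4*((n:ℝ)+j+1)*c n j*f (j+1) + 2*(2*(n:ℝ)+1-2*(j:ℝ)) * c n j * f j := by
      intro j _; ring
    rw [Finset.sum_congr rfl e3, Finset.sum_add_distrib]
    congr 1
    rw [Finset.sum_range_succ' (fun j => 2*(2*(n:ℝ)+1-2*(j:ℝ)) * c n j * f j) n]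
    congr 1
    · exact Finset.sum_congr rfl fun j _ => by push_cast; ring
    · push_cast; ring
  rw [hL, hR]

lemma U' (m j : ℕ) (hj : j ≤ m) :
    4*(16*((m:ℝ)+1)^2-1) * c m j
      = (if j = 0 then 0 else 4*((m:ℝ)+1)*((j:ℝ)-(m:ℝ)-2) * c (m+1) (j-1))
        + 2*((m:ℝ)+1)*(6*(m:ℝ)+7-6*(j:ℝ)) * c (m+1) j
        + 8*((m:ℝ)+1)*((j:ℝ)+1) * c (m+1) (j+1) := by
  cases j with
  | zero =>
    have := U0 m
    simp only [if_pos rfl, Nat.cast_zero]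
    push_cast at this ⊢
    linear_combination this
  | succ b =>
    obtain ⟨a, rfl⟩ : ∃ a, m = a + b + 1 := ⟨m - b - 1, by omega⟩
    have ht := U1 a b
    rw [if_neg (by omega), show b+1-1 = b by omega, show a+b+1+1 = a+b+2 by omega]
    push_cast at ht ⊢
    linear_combination ht

lemma L2 (m : ℕ) (f : ℕ → ℝ) :
    ∑ j ∈ range (m+1), 4*(16*((m:ℝ)+1)^2-1) * c m j * f j
      = ∑ j ∈ range (m+2), c (m+1) j *
          (4*((m:ℝ)+1)*((j:ℝ)-(m:ℝ)-1) * f (j+1)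
           + 2*((m:ℝ)+1)*(6*(m:ℝ)+7-6*(j:ℝ)) * f j
           + 8*((m:ℝ)+1)*(j:ℝ) * f (j-1)) := by
  set Q : ℕ → ℝ := fun j => 4*((m:ℝ)+1)*((j:ℝ)-(m:ℝ)-2) * c (m+1) (j-1) * f j with hQ
  set B : ℕ → ℝ := fun j => 2*((m:ℝ)+1)*(6*(m:ℝ)+7-6*(j:ℝ)) * c (m+1) j * f j with hB
  -- LHS
  have hLHS : ∑ j ∈ range (m+1), 4*(16*((m:ℝ)+1)^2-1) * c m j * f j
      = ((∑ j ∈ range (m+1), Q j) - Q 0) + (∑ j ∈ range (m+1), B j)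
        + (∑ j ∈ range (m+1), 8*((m:ℝ)+1)*((j:ℝ)+1) * c (m+1) (j+1) * f j) := by
    have e1 : ∀ j ∈ range (m+1), 4*(16*((m:ℝ)+1)^2-1) * c m j * f j
        = (if j = 0 then 0 else Q j) + B j
          + 8*((m:ℝ)+1)*((j:ℝ)+1) * c (m+1) (j+1) * f j := by
      intro j hj
      rw [mem_range] at hj
      have := U' m j (by omega)
      rw [this]
      simp only [hQ, hB]
      split_ifs <;> ring
    rw [Finset.sum_congr rfl e1, Finset.sum_add_distrib, Finset.sum_add_distrib]
    have e2 : ∑ j ∈ range (m+1), (if j = 0 then 0 else Q j)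
        = (∑ j ∈ range (m+1), Q j) - Q 0 := by
      have : ∑ j ∈ range (m+1), (if j = 0 then Q j else 0) = Q 0 := by
        rw [Finset.sum_ite_eq' (range (m+1)) 0 Q, if_pos (by simp)]
      have e3 : ∀ j ∈ range (m+1), (if j = 0 then 0 else Q j)
          = Q j - (if j = 0 then Q j else 0) := by
        intro j _; split_ifs <;> ring
      rw [Finset.sum_congr rfl e3, Finset.sum_sub_distrib, this]
    rw [e2]
  rw [hLHS]
  -- RHS
  have eR : ∀ j ∈ range (m+2), c (m+1) j *
          (4*((m:ℝ)+1)*((j:ℝ)-(m:ℝ)-1) * f (j+1)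
           + 2*((m:ℝ)+1)*(6*(m:ℝ)+7-6*(j:ℝ)) * f j
           + 8*((m:ℝ)+1)*(j:ℝ) * f (j-1))
      = 4*((m:ℝ)+1)*((j:ℝ)-(m:ℝ)-1) * c (m+1) j * f (j+1) + B j
        + 8*((m:ℝ)+1)*(j:ℝ) * c (m+1) j * f (j-1) := by
    intro j _; simp only [hB]; ring
  rw [Finset.sum_congr rfl eR, Finset.sum_add_distrib, Finset.sum_add_distrib]
  -- piece A
  have hA : ∑ j ∈ range (m+2), 4*((m:ℝ)+1)*((j:ℝ)-(m:ℝ)-1) * c (m+1) j * f (j+1)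
      = ((∑ j ∈ range (m+1), Q j) - Q 0) + (-4*((m:ℝ)+1) * c (m+1) m * f (m+1)) := by
    have h1 : ∑ j ∈ range (m+2), Q j
        = ∑ j ∈ range (m+1), 4*((m:ℝ)+1)*((j:ℝ)-(m:ℝ)-1) * c (m+1) j * f (j+1) + Q 0 := by
      rw [Finset.sum_range_succ' Q (m+1)]
      congr 1
      refine Finset.sum_congr rfl fun j _ => ?_
      simp only [hQ, Nat.add_sub_cancel]
      push_cast
      ring
    have h2 : ∑ j ∈ range (m+2), Q j = ∑ j ∈ range (m+1), Q j + Q (m+1) := by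
      rw [Finset.sum_range_succ]
    have h3 : Q (m+1) = -4*((m:ℝ)+1) * c (m+1) m * f (m+1) := by
      simp only [hQ, Nat.add_sub_cancel]
      push_cast
      ring
    have h4 : ∑ j ∈ range (m+2), 4*((m:ℝ)+1)*((j:ℝ)-(m:ℝ)-1) * c (m+1) j * f (j+1)
        = ∑ j ∈ range (m+1), 4*((m:ℝ)+1)*((j:ℝ)-(m:ℝ)-1) * c (m+1) j * f (j+1) := by
      rw [Finset.sum_range_succ]
      push_cast
      ring_nf
    rw [h4]
    linarith [h1, h2, h3]
  -- piece B
  have hBsum : ∑ j ∈ range (m+2), B j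
      = ∑ j ∈ range (m+1), B j + 2*((m:ℝ)+1) * c (m+1) (m+1) * f (m+1) := by
    rw [Finset.sum_range_succ]
    congr 1
    simp only [hB]
    push_cast
    ring
  -- piece C
  have hC : ∑ j ∈ range (m+2), 8*((m:ℝ)+1)*(j:ℝ) * c (m+1) j * f (j-1)
      = ∑ j ∈ range (m+1), 8*((m:ℝ)+1)*((j:ℝ)+1) * c (m+1) (j+1) * f j := by
    rw [Finset.sum_range_succ' (fun j => 8*((m:ℝ)+1)*(j:ℝ) * c (m+1) j * f (j-1)) (m+1)]
    simp only [Nat.cast_zero, mul_zero, zero_mul, add_zero, Nat.add_sub_cancel]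
    refine Finset.sum_congr rfl fun j _ => ?_
    push_cast
    ring
  rw [hA, hBsum, hC, Ub m]
  ring

lemma P1 (n j k : ℕ) :
    2*((n:ℝ)+j+1)*((j+1).choose (k+1) : ℝ) + (2*(n:ℝ)+1-2*j)*(j.choose (k+1) : ℝ)
      = 2*((n:ℝ)+k+1)*(j.choose k : ℝ) + (4*(n:ℝ)+2*k+5)*(j.choose (k+1) : ℝ) := by
  have hp : ((j+1).choose (k+1) : ℝ) = (j.choose k : ℝ) + (j.choose (k+1) : ℝ) := by
    exact_mod_cast congrArg (fun x : ℕ => (x : ℝ)) (Nat.choose_succ_succ j k)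
  rw [hp]
  linear_combination 2 * R1 j k

lemma P2 (n j k : ℕ) :
    2*((j:ℝ)-(n:ℝ))*((j+1).choose (k+1) : ℝ) + (6*(n:ℝ)+1-6*(j:ℝ))*(j.choose (k+1) : ℝ)
        + 4*(j:ℝ)*((j-1).choose (k+1) : ℝ)
      = (4*(n:ℝ)-1-2*(k:ℝ))*(j.choose (k+1) : ℝ) + 2*((k:ℝ)-(n:ℝ))*(j.choose k : ℝ) := by
  have hp : ((j+1).choose (k+1) : ℝ) = (j.choose k : ℝ) + (j.choose (k+1) : ℝ) := by
    exact_mod_cast congrArg (fun x : ℕ => (x : ℝ)) (Nat.choose_succ_succ j k)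
  rw [hp]
  linear_combination 2 * R1 j k + 4 * R2 j k

lemma pow_two_ne : ∀ n : ℕ, ((2:ℝ)^(2*n)) ≠ 0 := fun n => pow_ne_zero _ two_ne_zero

lemma KP1a (n k : ℕ) :
    2*((n:ℝ)+1) * (borosMoll (n+1)).coeff (k+1)
      = 2*((n:ℝ)+(k:ℝ)+1) * (borosMoll n).coeff k
        + (4*(n:ℝ)+2*(k:ℝ)+5) * (borosMoll n).coeff (k+1) := by
  have key : ∑ j ∈ range (n+2), ((n:ℝ)+1) * c (n+1) j * ((j.choose (k+1) : ℕ) : ℝ)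
      = 4*((n:ℝ)+(k:ℝ)+1) * ∑ j ∈ range (n+1), c n j * (j.choose k : ℝ)
        + 2*(4*(n:ℝ)+2*(k:ℝ)+5) * ∑ j ∈ range (n+1), c n j * (j.choose (k+1) : ℝ) := by
    rw [L1 n (fun j => (j.choose (k+1) : ℝ)), Finset.mul_sum, Finset.mul_sum,
      ← Finset.sum_add_distrib]
    refine Finset.sum_congr rfl fun j _ => ?_
    have := P1 n j k
    push_cast at this ⊢
    linear_combination (2 * c n j) * this
  rw [coeff_borosMoll, coeff_borosMoll, coeff_borosMoll]
  have h2 : (2:ℝ)^(2*(n+1)) = 4 * 2^(2*n) := by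
    rw [show 2*(n+1) = 2*n+2 by ring, pow_add]; ring
  have h2' : ((2:ℝ)^(2*(n+1)))⁻¹ = (4:ℝ)⁻¹ * ((2:ℝ)^(2*n))⁻¹ := by
    rw [h2, mul_inv]
  rw [h2']
  have hs : ∑ j ∈ range (n+2), ((n:ℝ)+1) * c (n+1) j * ((j.choose (k+1) : ℕ) : ℝ)
      = ((n:ℝ)+1) * ∑ j ∈ range (n+1+1), c (n+1) j * (j.choose (k+1) : ℝ) := by
    rw [Finset.mul_sum]
    exact Finset.sum_congr rfl fun j _ => by ring
  rw [hs] at key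
  linear_combination (((2:ℝ)^(2*n))⁻¹/2) * key

lemma KP1b (n : ℕ) :
    2*((n:ℝ)+1) * (borosMoll (n+1)).coeff 0 = (4*(n:ℝ)+3) * (borosMoll n).coeff 0 := by
  have key : ∑ j ∈ range (n+2), ((n:ℝ)+1) * c (n+1) j * ((j.choose 0 : ℕ) : ℝ)
      = 2*(4*(n:ℝ)+3) * ∑ j ∈ range (n+1), c n j * (j.choose 0 : ℝ) := by
    rw [L1 n (fun j => (j.choose 0 : ℝ)), Finset.mul_sum]
    refine Finset.sum_congr rfl fun j _ => ?_
    simp only [Nat.choose_zero_right, Nat.cast_one]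
    ring
  rw [coeff_borosMoll, coeff_borosMoll]
  have h2 : (2:ℝ)^(2*(n+1)) = 4 * 2^(2*n) := by
    rw [show 2*(n+1) = 2*n+2 by ring, pow_add]; ring
  have h2' : ((2:ℝ)^(2*(n+1)))⁻¹ = (4:ℝ)⁻¹ * ((2:ℝ)^(2*n))⁻¹ := by
    rw [h2, mul_inv]
  rw [h2']
  have hs : ∑ j ∈ range (n+2), ((n:ℝ)+1) * c (n+1) j * ((j.choose 0 : ℕ) : ℝ)
      = ((n:ℝ)+1) * ∑ j ∈ range (n+1+1), c (n+1) j * (j.choose 0 : ℝ) := by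
    rw [Finset.mul_sum]
    exact Finset.sum_congr rfl fun j _ => by ring
  rw [hs] at key
  linear_combination (((2:ℝ)^(2*n))⁻¹/2) * key

lemma Aa (m k : ℕ) :
    (16*((m:ℝ)+1)^2-1) * (borosMoll m).coeff (k+1)
      = 2*((m:ℝ)+1)*(4*(m:ℝ)+3-2*(k:ℝ)) * (borosMoll (m+1)).coeff (k+1)
        + 4*((m:ℝ)+1)*((k:ℝ)-((m:ℝ)+1)) * (borosMoll (m+1)).coeff k := by
  have key : ∑ j ∈ range (m+1), 4*(16*((m:ℝ)+1)^2-1) * c m j * ((j.choose (k+1) : ℕ) : ℝ)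
      = 2*((m:ℝ)+1)*(4*(m:ℝ)+3-2*(k:ℝ)) * ∑ j ∈ range (m+2), c (m+1) j * (j.choose (k+1) : ℝ)
        + 4*((m:ℝ)+1)*((k:ℝ)-((m:ℝ)+1)) * ∑ j ∈ range (m+2), c (m+1) j * (j.choose k : ℝ) := by
    rw [L2 m (fun j => (j.choose (k+1) : ℝ)), Finset.mul_sum, Finset.mul_sum,
      ← Finset.sum_add_distrib]
    refine Finset.sum_congr rfl fun j _ => ?_
    have := P2 (m+1) j k
    push_cast at this ⊢
    linear_combination (2*((m:ℝ)+1) * c (m+1) j) * this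
  rw [coeff_borosMoll, coeff_borosMoll, coeff_borosMoll]
  have h2 : (2:ℝ)^(2*(m+1)) = 4 * 2^(2*m) := by
    rw [show 2*(m+1) = 2*m+2 by ring, pow_add]; ring
  have h2' : ((2:ℝ)^(2*(m+1)))⁻¹ = (4:ℝ)⁻¹ * ((2:ℝ)^(2*m))⁻¹ := by
    rw [h2, mul_inv]
  rw [h2']
  have hs : ∑ j ∈ range (m+1), 4*(16*((m:ℝ)+1)^2-1) * c m j * ((j.choose (k+1) : ℕ) : ℝ)
      = 4*(16*((m:ℝ)+1)^2-1) * ∑ j ∈ range (m+1), c m j * (j.choose (k+1) : ℝ) := by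
    rw [Finset.mul_sum]
    exact Finset.sum_congr rfl fun j _ => by ring
  rw [hs] at key
  linear_combination (((2:ℝ)^(2*m))⁻¹/4) * key

lemma Ab (m : ℕ) :
    (16*((m:ℝ)+1)^2-1) * (borosMoll m).coeff 0
      = (8*((m:ℝ)+1)^2+2*((m:ℝ)+1)) * (borosMoll (m+1)).coeff 0 := by
  have key : ∑ j ∈ range (m+1), 4*(16*((m:ℝ)+1)^2-1) * c m j * ((j.choose 0 : ℕ) : ℝ)
      = (8*((m:ℝ)+1)^2+2*((m:ℝ)+1)) * ∑ j ∈ range (m+2), c (m+1) j * (j.choose 0 : ℝ) := by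
    rw [L2 m (fun j => (j.choose 0 : ℝ)), Finset.mul_sum]
    refine Finset.sum_congr rfl fun j _ => ?_
    simp only [Nat.choose_zero_right, Nat.cast_one]
    push_cast
    ring
  rw [coeff_borosMoll, coeff_borosMoll]
  have h2 : (2:ℝ)^(2*(m+1)) = 4 * 2^(2*m) := by
    rw [show 2*(m+1) = 2*m+2 by ring, pow_add]; ring
  have h2' : ((2:ℝ)^(2*(m+1)))⁻¹ = (4:ℝ)⁻¹ * ((2:ℝ)^(2*m))⁻¹ := by
    rw [h2, mul_inv]
  rw [h2']
  have hs : ∑ j ∈ range (m+1), 4*(16*((m:ℝ)+1)^2-1) * c m j * ((j.choose 0 : ℕ) : ℝ)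
      = 4*(16*((m:ℝ)+1)^2-1) * ∑ j ∈ range (m+1), c m j * (j.choose 0 : ℝ) := by
    rw [Finset.mul_sum]
    exact Finset.sum_congr rfl fun j _ => by ring
  rw [hs] at key
  linear_combination (((2:ℝ)^(2*m))⁻¹/4) * key

end BM

open BM in
/-- For every `n ≥ 1` and every integer `0 ≤ i ≤ n`:
`d_i(n+1) = ((8n²+8n+3−4i²)/(2(n+1−i)(n+1)))·d_i(n)
 − ((n+i)(4n−1)(4n+1)/(4n(n+1)(n+1−i)))·d_i(n−1)`. -/
theorem bmCoeff_three_term_recurrence (n : ℕ) (hn : 1 ≤ n) (i : ℤ)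
    (hi0 : 0 ≤ i) (hi1 : i ≤ (n : ℤ)) :
    bmCoeff i (n + 1) =
      (8 * (n : ℝ) ^ 2 + 8 * (n : ℝ) + 3 - 4 * (i : ℝ) ^ 2) /
          (2 * ((n : ℝ) + 1 - (i : ℝ)) * ((n : ℝ) + 1)) * bmCoeff i n -
        ((n : ℝ) + (i : ℝ)) * (4 * (n : ℝ) - 1) * (4 * (n : ℝ) + 1) /
          (4 * (n : ℝ) * ((n : ℝ) + 1) * ((n : ℝ) + 1 - (i : ℝ))) * bmCoeff i (n - 1) := by
  obtain ⟨k, rfl⟩ : ∃ k : ℕ, i = (k : ℤ) :=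
    ⟨i.toNat, (Int.toNat_of_nonneg hi0).symm⟩
  have hk : k ≤ n := by exact_mod_cast hi1
  obtain ⟨m, rfl⟩ : ∃ m, n = m + 1 := ⟨n - 1, by omega⟩
  have hbm : ∀ (N : ℕ) (t : ℕ), bmCoeff (t : ℤ) N = (borosMoll N).coeff t := by
    intro N t; simp [bmCoeff]
  rw [show (m+1) - 1 = m by omega, hbm, hbm, hbm]
  push_cast
  have hm1 : ((m:ℝ)+1) ≠ 0 := by positivity
  have hm2 : ((m:ℝ)+2) ≠ 0 := by positivity
  have h16 : (16*((m:ℝ)+1)^2-1) ≠ 0 := by nlinarith [sq_nonneg ((m:ℝ)+1), Nat.cast_nonneg (α := ℝ) m]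
  cases k with
  | zero =>
    have h1 := KP1b (m+1)
    have h2 := Ab m
    have hX : (borosMoll (m+1+1)).coeff 0
        = (4*((m:ℝ)+1)+3) * (borosMoll (m+1)).coeff 0 / (2*((m:ℝ)+2)) := by
      rw [eq_div_iff (by positivity)]
      push_cast at h1
      linarith
    have hZ : (borosMoll m).coeff 0
        = (8*((m:ℝ)+1)^2+2*((m:ℝ)+1)) * (borosMoll (m+1)).coeff 0 / (16*((m:ℝ)+1)^2-1) := by
      rw [eq_div_iff h16]
      linarith
    rw [hX, hZ]
    have hden : ((m:ℝ)+1+1-0) ≠ 0 := by norm_num; positivity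
    push_cast
    generalize hD : (16*((m:ℝ)+1)^2-1) = D at h16 ⊢
    field_simp
    rw [← hD]
    ring
  | succ k =>
    have hk' : k ≤ m := by omega
    have h1 := KP1a (m+1) k
    have h2 := Aa m k
    have hX : (borosMoll (m+1+1)).coeff (k+1)
        = (2*((m:ℝ)+(k:ℝ)+2) * (borosMoll (m+1)).coeff k
            + (4*(m:ℝ)+2*(k:ℝ)+9) * (borosMoll (m+1)).coeff (k+1)) / (2*((m:ℝ)+2)) := by
      rw [eq_div_iff (by positivity)]
      push_cast at h1
      linarith
    have hZ : (borosMoll m).coeff (k+1)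
        = (2*((m:ℝ)+1)*(4*(m:ℝ)+3-2*(k:ℝ)) * (borosMoll (m+1)).coeff (k+1)
            + 4*((m:ℝ)+1)*((k:ℝ)-((m:ℝ)+1)) * (borosMoll (m+1)).coeff k) / (16*((m:ℝ)+1)^2-1) := by
      rw [eq_div_iff h16]
      linarith
    rw [hX, hZ]
    have hden : ((m:ℝ)+1-(k:ℝ)) ≠ 0 := by
      have : (k:ℝ) ≤ m := by exact_mod_cast hk'
      nlinarith
    have hden2 : ((m:ℝ)+1+1-((k:ℝ)+1)) ≠ 0 := by
      intro h; apply hden; linarith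
    push_cast
    generalize hD : (16*((m:ℝ)+1)^2-1) = D at h16 ⊢
    field_simp
    rw [← hD]
    ring
end

section
/- For every integer n ≥ 0 and every integer i with 1 ≤ i ≤ n+1, the Boros-Moll coefficients satisfy d_{i−1}(n) = ((n+1)/(n+i)) · d_i(n+1) − ((4n + 2i + 3)/(2(n+i))) · d_i(n), where d_j(m) is taken to be 0 whenever j < 0 or j > m. -/
open Polynomial

noncomputable def bmA (n j : ℕ) : ℝ :=
  2 ^ j * (Nat.choose (2 * n - 2 * j) (n - j) : ℝ) * (Nat.choose (n + j) j : ℝ)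

noncomputable def bmB (n : ℕ) (j : ℤ) : ℝ :=
  if 0 ≤ j ∧ j ≤ (n : ℤ) then bmA n j.toNat else 0

lemma coeff_borosMoll (n k : ℕ) :
    (borosMoll n).coeff k
      = ((4:ℝ)^n)⁻¹ * ∑ j ∈ Finset.range (n+1), bmA n j * (Nat.choose j k : ℝ) := by
  unfold borosMoll bmA
  rw [Polynomial.coeff_smul, Polynomial.finset_sum_coeff, smul_eq_mul, Finset.mul_sum,
    Finset.mul_sum]
  refine Finset.sum_congr rfl fun j _ => ?_
  rw [Polynomial.coeff_C_mul, Polynomial.coeff_X_add_one_pow]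
  rw [show (2:ℝ)^(2*n) = 4^n by rw [pow_mul]; norm_num]

lemma F1 (m : ℕ) : ((m:ℝ)+1) * (Nat.choose (2*m+2) (m+1) : ℝ)
    = (4*(m:ℝ)+2) * (Nat.choose (2*m) m : ℝ) := by
  have h := Nat.succ_mul_centralBinom_succ m
  unfold Nat.centralBinom at h
  rw [show 2*(m+1) = 2*m+2 from by ring] at h
  have h' : (((m+1) * Nat.choose (2*m+2) (m+1) : ℕ) : ℝ)
      = ((2*(2*m+1) * Nat.choose (2*m) m : ℕ) : ℝ) := by rw [h]
  push_cast at h'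
  linear_combination h'

lemma term_id (n j : ℕ) (hj : j ≤ n+1) :
    2*((n:ℝ)+1) * bmA (n+1) j
      = 8*((n:ℝ)+j) * bmB n ((j:ℤ)-1) + (8*(n:ℝ)+4-8*(j:ℝ)) * bmB n j := by
  rcases Nat.eq_zero_or_pos j with rfl | hj1
  · have hb1 : bmB n (((0:ℕ):ℤ)-1) = 0 := by simp [bmB]
    have hb2 : bmB n ((0:ℕ):ℤ) = bmA n 0 := by simp [bmB]
    rw [hb1, hb2]
    unfold bmA
    simp only [pow_zero, Nat.sub_zero, Nat.choose_zero_right, Nat.cast_zero,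
      Nat.add_zero, Nat.cast_one, Nat.choose_self]
    rw [show 2*n - 2*0 = 2*n from by omega, show 2*(n+1) - 2*0 = 2*n+2 from by omega]
    push_cast
    linear_combination 2 * F1 n
  · rcases eq_or_lt_of_le hj with rfl | hlt
    · -- j = n + 1
      have hb1 : bmB n (((n+1:ℕ):ℤ)-1) = bmA n n := by
        have : (((n+1:ℕ):ℤ)-1) = (n:ℤ) := by push_cast; ring
        rw [this]; simp [bmB]
      have hb2 : bmB n ((n+1:ℕ):ℤ) = 0 := by
        simp [bmB]
      rw [hb1, hb2]
      unfold bmA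
      rw [show 2*(n+1) - 2*(n+1) = 0 from by omega, show (n+1) - (n+1) = 0 from by omega,
        show 2*n - 2*n = 0 from by omega, show n - n = 0 from by omega,
        show (n+1)+(n+1) = 2*n+2 from by ring, show n+n = 2*n from by ring]
      simp only [Nat.choose_self, Nat.cast_one]
      push_cast
      linear_combination (2:ℝ)^(n+2) * F1 n
    · have hjn : j ≤ n := by omega
      obtain ⟨t, rfl⟩ : ∃ t, j = t + 1 := ⟨j - 1, by omega⟩
      obtain ⟨m, rfl⟩ : ∃ m, n = m + t + 1 := ⟨n - t - 1, by omega⟩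
      have hb1 : bmB (m+t+1) (((t+1:ℕ):ℤ)-1) = bmA (m+t+1) t := by
        have h : (((t+1:ℕ):ℤ)-1) = ((t:ℕ):ℤ) := by push_cast; ring
        rw [h]
        have hc : (0:ℤ) ≤ ((t:ℕ):ℤ) ∧ ((t:ℕ):ℤ) ≤ ((m+t+1:ℕ):ℤ) := by
          constructor <;> (push_cast; omega)
        unfold bmB; rw [if_pos hc]; simp
      have hb2 : bmB (m+t+1) ((t+1:ℕ):ℤ) = bmA (m+t+1) (t+1) := by
        have hc : (0:ℤ) ≤ ((t+1:ℕ):ℤ) ∧ ((t+1:ℕ):ℤ) ≤ ((m+t+1:ℕ):ℤ) := by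
          constructor <;> (push_cast; omega)
        unfold bmB; rw [if_pos hc]; simp
      rw [hb1, hb2]
      unfold bmA
      rw [show 2*(m+t+1+1) - 2*(t+1) = 2*m+2 from by omega,
          show (m+t+1+1) - (t+1) = m+1 from by omega,
          show 2*(m+t+1) - 2*t = 2*m+2 from by omega,
          show (m+t+1) - t = m+1 from by omega,
          show 2*(m+t+1) - 2*(t+1) = 2*m from by omega,
          show (m+t+1) - (t+1) = m from by omega,
          show (m+t+1+1) + (t+1) = m+2*t+3 from by ring,
          show (m+t+1) + t = m+2*t+1 from by ring,
          show (m+t+1) + (t+1) = m+2*t+2 from by ring]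
      have h1 := F1 m
      have h2 : ((m:ℝ)+2*t+2) * (Nat.choose (m+2*t+1) t : ℝ)
          = (Nat.choose (m+2*t+2) (t+1) : ℝ) * ((t:ℝ)+1) := by
        have h := Nat.add_one_mul_choose_eq (m+2*t+1) t
        have h' : (((m+2*t+2) * Nat.choose (m+2*t+1) t : ℕ) : ℝ)
            = ((Nat.choose (m+2*t+2) (t+1) * (t+1) : ℕ) : ℝ) := by exact_mod_cast congrArg Nat.cast h
        push_cast at h'
        linear_combination h'
      have h3 : (Nat.choose (m+2*t+3) (t+1) : ℝ)
          = (Nat.choose (m+2*t+2) t : ℝ) + (Nat.choose (m+2*t+2) (t+1) : ℝ) := by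
        exact_mod_cast congrArg Nat.cast (Nat.choose_succ_succ (m+2*t+2) t)
      have h4 : (Nat.choose (m+2*t+2) (t+1) : ℝ) * ((t:ℝ)+1)
          = (Nat.choose (m+2*t+2) t : ℝ) * ((m:ℝ)+t+2) := by
        have h := Nat.choose_succ_right_eq (m+2*t+2) t
        rw [show m+2*t+2 - t = m+t+2 from by omega] at h
        have h' : ((Nat.choose (m+2*t+2) (t+1) * (t+1) : ℕ) : ℝ)
            = ((Nat.choose (m+2*t+2) t * (m+t+2) : ℕ) : ℝ) := by exact_mod_cast congrArg Nat.cast h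
        push_cast at h'
        linear_combination h'
      push_cast
      linear_combination (2:ℝ)^(t+2) * (Nat.choose (m+2*t+2) (t+1):ℝ) * h1
        - (2:ℝ)^(t+3) * (Nat.choose (2*m+2) (m+1):ℝ) * h2
        + (2:ℝ)^(t+2) * ((m:ℝ)+t+2) * (Nat.choose (2*m+2) (m+1):ℝ) * h3
        - (2:ℝ)^(t+2) * (Nat.choose (2*m+2) (m+1):ℝ) * h4

lemma pascal_id (n j K : ℕ) :
    8*((n:ℝ)+(j:ℝ)+1) * (Nat.choose (j+1) (K+1) : ℝ)
      + (8*(n:ℝ)+4-8*(j:ℝ)) * (Nat.choose j (K+1) : ℝ)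
    = 8*((n:ℝ)+(K:ℝ)+1) * (Nat.choose j K : ℝ)
      + (16*(n:ℝ)+8*(K:ℝ)+20) * (Nat.choose j (K+1) : ℝ) := by
  have hp1 : ((j:ℝ)+1) * (Nat.choose j K : ℝ)
      = (Nat.choose (j+1) (K+1) : ℝ) * ((K:ℝ)+1) := by
    have h := Nat.add_one_mul_choose_eq j K
    have h' : (((j+1) * Nat.choose j K : ℕ) : ℝ)
        = ((Nat.choose (j+1) (K+1) * (K+1) : ℕ) : ℝ) := by exact_mod_cast congrArg Nat.cast h
    push_cast at h'
    linear_combination h'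
  have hp2 : (Nat.choose (j+1) (K+1) : ℝ)
      = (Nat.choose j K : ℝ) + (Nat.choose j (K+1) : ℝ) := by
    exact_mod_cast congrArg Nat.cast (Nat.choose_succ_succ j K)
  linear_combination 8*hp1 + (8*((n:ℝ)+(j:ℝ)+(K:ℝ)+2))*hp2

lemma sum_id (n K : ℕ) :
    2*((n:ℝ)+1) * ∑ j ∈ Finset.range (n+2), bmA (n+1) j * (Nat.choose j (K+1) : ℝ)
      = 8*((n:ℝ)+(K:ℝ)+1) * ∑ j ∈ Finset.range (n+1), bmA n j * (Nat.choose j K : ℝ)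
        + (16*(n:ℝ)+8*(K:ℝ)+20) * ∑ j ∈ Finset.range (n+1), bmA n j * (Nat.choose j (K+1) : ℝ) := by
  rw [Finset.mul_sum]
  calc ∑ j ∈ Finset.range (n+2), 2*((n:ℝ)+1) * (bmA (n+1) j * (Nat.choose j (K+1) : ℝ))
      = ∑ j ∈ Finset.range (n+2),
          (8*((n:ℝ)+(j:ℝ)) * bmB n ((j:ℤ)-1) * (Nat.choose j (K+1):ℝ)
            + (8*(n:ℝ)+4-8*(j:ℝ)) * bmB n j * (Nat.choose j (K+1):ℝ)) := by
        refine Finset.sum_congr rfl fun j hj => ?_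
        rw [Finset.mem_range] at hj
        have h := term_id n j (by omega)
        linear_combination (Nat.choose j (K+1) : ℝ) * h
    _ = (∑ j ∈ Finset.range (n+2),
            8*((n:ℝ)+(j:ℝ)) * bmB n ((j:ℤ)-1) * (Nat.choose j (K+1):ℝ))
        + ∑ j ∈ Finset.range (n+2),
            (8*(n:ℝ)+4-8*(j:ℝ)) * bmB n j * (Nat.choose j (K+1):ℝ) :=
        Finset.sum_add_distrib
    _ = (∑ j ∈ Finset.range (n+1),
            8*((n:ℝ)+((j+1:ℕ):ℝ)) * bmB n (((j+1:ℕ):ℤ)-1) * (Nat.choose (j+1) (K+1):ℝ))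
        + ∑ j ∈ Finset.range (n+1),
            (8*(n:ℝ)+4-8*(j:ℝ)) * bmB n j * (Nat.choose j (K+1):ℝ) := by
        rw [Finset.sum_range_succ'
          (fun j => 8*((n:ℝ)+(j:ℝ)) * bmB n ((j:ℤ)-1) * (Nat.choose j (K+1):ℝ)) (n+1)]
        rw [Finset.sum_range_succ
          (fun j => (8*(n:ℝ)+4-8*(j:ℝ)) * bmB n j * (Nat.choose j (K+1):ℝ)) (n+1)]
        have e1 : bmB n (((0:ℕ):ℤ)-1) = 0 := by
          unfold bmB; rw [if_neg]; omega
        have e2 : bmB n ((n+1:ℕ):ℤ) = 0 := by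
          unfold bmB; rw [if_neg]; omega
        rw [e1, e2]
        ring
    _ = ∑ j ∈ Finset.range (n+1),
          (8*((n:ℝ)+(K:ℝ)+1) * (bmA n j * (Nat.choose j K : ℝ))
            + (16*(n:ℝ)+8*(K:ℝ)+20) * (bmA n j * (Nat.choose j (K+1) : ℝ))) := by
        rw [← Finset.sum_add_distrib]
        refine Finset.sum_congr rfl fun j hj => ?_
        rw [Finset.mem_range] at hj
        have e1 : bmB n (((j+1:ℕ):ℤ)-1) = bmA n j := by
          have h : (((j+1:ℕ):ℤ)-1) = ((j:ℕ):ℤ) := by push_cast; ring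
          rw [h]
          have hc : (0:ℤ) ≤ ((j:ℕ):ℤ) ∧ ((j:ℕ):ℤ) ≤ ((n:ℕ):ℤ) := by
            constructor <;> (push_cast; omega)
          unfold bmB; rw [if_pos hc]; simp
        have e2 : bmB n ((j:ℕ):ℤ) = bmA n j := by
          have hc : (0:ℤ) ≤ ((j:ℕ):ℤ) ∧ ((j:ℕ):ℤ) ≤ ((n:ℕ):ℤ) := by
            constructor <;> (push_cast; omega)
          unfold bmB; rw [if_pos hc]; simp
        rw [e1, e2]
        have hp := pascal_id n j K
        push_cast
        linear_combination bmA n j * hp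
    _ = 8*((n:ℝ)+(K:ℝ)+1) * ∑ j ∈ Finset.range (n+1), bmA n j * (Nat.choose j K : ℝ)
        + (16*(n:ℝ)+8*(K:ℝ)+20) * ∑ j ∈ Finset.range (n+1), bmA n j * (Nat.choose j (K+1) : ℝ) := by
        rw [Finset.sum_add_distrib, ← Finset.mul_sum, ← Finset.mul_sum]


/-- For every `n ≥ 0` and every integer `1 ≤ i ≤ n+1`:
`d_{i−1}(n) = ((n+1)/(n+i))·d_i(n+1) − ((4n+2i+3)/(2(n+i)))·d_i(n)`. -/
theorem bmCoeff_backward_recurrence (n : ℕ) (i : ℤ)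
    (hi0 : 1 ≤ i) (hi1 : i ≤ (n : ℤ) + 1) :
    bmCoeff (i - 1) n =
      ((n : ℝ) + 1) / ((n : ℝ) + (i : ℝ)) * bmCoeff i (n + 1) -
        (4 * (n : ℝ) + 2 * (i : ℝ) + 3) / (2 * ((n : ℝ) + (i : ℝ))) * bmCoeff i n := by
  obtain ⟨k, rfl⟩ : ∃ k : ℕ, i = (k : ℤ) := ⟨i.toNat, (Int.toNat_of_nonneg (by omega)).symm⟩
  have hk1 : 1 ≤ k := by exact_mod_cast hi0
  have hk2 : k ≤ n+1 := by exact_mod_cast hi1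
  obtain ⟨K, rfl⟩ : ∃ K, k = K+1 := ⟨k-1, by omega⟩
  have c1 : bmCoeff (((K+1:ℕ):ℤ) - 1) n = (borosMoll n).coeff K := by
    unfold bmCoeff
    rw [if_pos (by push_cast; omega)]
    congr 1
    omega
  have c2 : bmCoeff ((K+1:ℕ):ℤ) (n+1) = (borosMoll (n+1)).coeff (K+1) := by
    unfold bmCoeff
    rw [if_pos (by positivity)]
    congr 1
  have c3 : bmCoeff ((K+1:ℕ):ℤ) n = (borosMoll n).coeff (K+1) := by
    unfold bmCoeff
    rw [if_pos (by positivity)]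
    congr 1
  rw [c1, c2, c3, coeff_borosMoll, coeff_borosMoll, coeff_borosMoll]
  have hs := sum_id n K
  have h4 : ((4:ℝ)^n) ≠ 0 := by positivity
  have hd : ((n:ℝ)+((K+1:ℕ):ℝ)) ≠ 0 := by positivity
  push_cast at hd ⊢
  field_simp
  ring_nf
  ring_nf at hs
  linear_combination (-((4:ℝ)^n)) * hs
end
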